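/- arXiv:1405.3874 — 6 statements merged into one kernel-verified Lean document; each statement's English description precedes it below -/
import Mathlib

section
/- Let Ω be a connected open subset of ℂ. Let T_0 be an operator in B_1(Ω) acting on a complex separable Hilbert space H_0, let T_1 be an operator in B_1(Ω) acting on a complex separable Hilbert space H_1, and let S : H_1 → H_0 be an arbitrary bounded linear operator. Then the block operator T = [[T_0, S],[0, T_1]] acting on H_0 ⊕ H_1 belongs to the Cowen-Douglas class B_2(Ω). -/
noncomputable section

open ContinuousLinearMap
open scoped InnerProductSpace

/-- The Cowen–Douglas class `B_n(Ω)`: `Ω ⊆ σ(T)`, `T - w` is surjective for every `w ∈ Ω`,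
the closed linear span of the kernels `ker (T - w)`, `w ∈ Ω`, is all of `H`, and
`dim ker (T - w) = n` for every `w ∈ Ω`. -/
def CowenDouglas {H : Type*} [NormedAddCommGroup H] [InnerProductSpace ℂ H]
    (n : ℕ) (Ω : Set ℂ) (T : H →L[ℂ] H) : Prop :=
  Ω ⊆ spectrum ℂ T ∧
  (∀ w ∈ Ω, Function.Surjective (T - w • (1 : H →L[ℂ] H))) ∧
  (⨆ w ∈ Ω, LinearMap.ker ((T - w • (1 : H →L[ℂ] H) : H →L[ℂ] H) : H →ₗ[ℂ] H)).topologicalClosure = ⊤ ∧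
  (∀ w ∈ Ω, Module.finrank ℂ (LinearMap.ker ((T - w • (1 : H →L[ℂ] H) : H →L[ℂ] H) : H →ₗ[ℂ] H)) = n)

/-- The block operator `[[T₀, S], [0, T₁]]` acting on the Hilbert space orthogonal direct
sum `H₀ ⊕ H₁` (realized as the `ℓ²`-product `WithLp 2 (H₀ × H₁)`). -/
def blockOp₂ {H₀ H₁ : Type*} [NormedAddCommGroup H₀] [NormedSpace ℂ H₀]
    [NormedAddCommGroup H₁] [NormedSpace ℂ H₁]
    (T₀ : H₀ →L[ℂ] H₀) (S : H₁ →L[ℂ] H₀) (T₁ : H₁ →L[ℂ] H₁) :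
    WithLp 2 (H₀ × H₁) →L[ℂ] WithLp 2 (H₀ × H₁) :=
  ((WithLp.prodContinuousLinearEquiv 2 ℂ H₀ H₁).symm : H₀ × H₁ →L[ℂ] WithLp 2 (H₀ × H₁)) ∘L
    ((T₀ ∘L fst ℂ H₀ H₁ + S ∘L snd ℂ H₀ H₁).prod (T₁ ∘L snd ℂ H₀ H₁)) ∘L
    ((WithLp.prodContinuousLinearEquiv 2 ℂ H₀ H₁) : WithLp 2 (H₀ × H₁) →L[ℂ] H₀ × H₁)

section Aux
variable {H₀ H₁ : Type*} [NormedAddCommGroup H₀] [NormedSpace ℂ H₀]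
    [NormedAddCommGroup H₁] [NormedSpace ℂ H₁]
    (T₀ : H₀ →L[ℂ] H₀) (S : H₁ →L[ℂ] H₀) (T₁ : H₁ →L[ℂ] H₁)

local notation "e" => WithLp.prodContinuousLinearEquiv 2 ℂ H₀ H₁

lemma blockOp₂_sub_smul_apply (w : ℂ) (z : WithLp 2 (H₀ × H₁)) :
    (blockOp₂ T₀ S T₁ - w • 1) z =
      (e).symm ((T₀ - w • 1) ((e) z).1 + S ((e) z).2, (T₁ - w • 1) ((e) z).2) := by
  have h1 : w • z = (e).symm (w • ((e) z).1, w • ((e) z).2) := by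
    apply ((e)).injective; simp [Prod.smul_mk]; rfl
  simp only [sub_apply, smul_apply, one_apply]
  change (blockOp₂ T₀ S T₁) z - w • z = _
  rw [h1]
  show (e).symm _ - _ = _
  rw [← map_sub]
  congr 1
  simp [Prod.mk_sub_mk]
  abel

lemma mem_ker_blockOp {w : ℂ} {z : WithLp 2 (H₀ × H₁)} :
    z ∈ LinearMap.ker ((blockOp₂ T₀ S T₁ - w • 1 : WithLp 2 (H₀ × H₁) →L[ℂ] WithLp 2 (H₀ × H₁)) : WithLp 2 (H₀ × H₁) →ₗ[ℂ] WithLp 2 (H₀ × H₁)) ↔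
      (T₀ - w • 1) ((e) z).1 + S ((e) z).2 = 0 ∧ (T₁ - w • 1) ((e) z).2 = 0 := by
  rw [LinearMap.mem_ker, ContinuousLinearMap.coe_coe, blockOp₂_sub_smul_apply]
  rw [show (0 : WithLp 2 (H₀ × H₁)) = (e).symm 0 from (map_zero _).symm]
  rw [(e).symm.injective.eq_iff, Prod.ext_iff]
  rfl

lemma symm_mem_ker_blockOp {w : ℂ} {x : H₀} {y : H₁}
    (hx : (T₀ - w • 1) x + S y = 0) (hy : (T₁ - w • 1) y = 0) :
    (e).symm (x, y) ∈ LinearMap.ker ((blockOp₂ T₀ S T₁ - w • 1 : WithLp 2 (H₀ × H₁) →L[ℂ] WithLp 2 (H₀ × H₁)) : WithLp 2 (H₀ × H₁) →ₗ[ℂ] WithLp 2 (H₀ × H₁)) := by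
  rw [mem_ker_blockOp]
  simpa using ⟨hx, hy⟩
end Aux


set_option maxHeartbeats 1000000 in
/-- If `T₀, T₁ ∈ B₁(Ω)` and `S` is an arbitrary bounded operator, then
`[[T₀, S], [0, T₁]] ∈ B₂(Ω)`. -/
theorem statement0
    {H₀ H₁ : Type*}
    [NormedAddCommGroup H₀] [InnerProductSpace ℂ H₀] [CompleteSpace H₀]
    [TopologicalSpace.SeparableSpace H₀]
    [NormedAddCommGroup H₁] [InnerProductSpace ℂ H₁] [CompleteSpace H₁]
    [TopologicalSpace.SeparableSpace H₁]
    (Ω : Set ℂ) (hΩopen : IsOpen Ω) (hΩconn : IsConnected Ω)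
    (T₀ : H₀ →L[ℂ] H₀) (T₁ : H₁ →L[ℂ] H₁) (S : H₁ →L[ℂ] H₀)
    (h₀ : CowenDouglas 1 Ω T₀) (h₁ : CowenDouglas 1 Ω T₁) :
    CowenDouglas 2 Ω (blockOp₂ T₀ S T₁) := by
  obtain ⟨-, h₀surj, h₀dens, h₀dim⟩ := h₀
  obtain ⟨-, h₁surj, h₁dens, h₁dim⟩ := h₁
  set e := WithLp.prodContinuousLinearEquiv 2 ℂ H₀ H₁ with he
  set T := blockOp₂ T₀ S T₁ with hT
  refine ⟨?_, ?_, ?_, ?_⟩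
  · -- spectrum
    intro w hw
    rw [spectrum.mem_iff]
    rintro ⟨u, hu⟩
    -- nonzero kernel vector for T₀ - w
    obtain ⟨v, hv0, -⟩ := finrank_eq_one_iff'.mp (h₀dim w hw)
    set z : WithLp 2 (H₀ × H₁) := e.symm ((v : H₀), 0) with hz
    have hzker : z ∈ LinearMap.ker ((T - w • 1 : WithLp 2 (H₀ × H₁) →L[ℂ] _) : WithLp 2 (H₀ × H₁) →ₗ[ℂ] WithLp 2 (H₀ × H₁)) := by
      apply symm_mem_ker_blockOp
      · simpa using v.2
      · simp
    have hz0 : z ≠ 0 := by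
      simp only [hz, ne_eq]
      rw [show (0 : WithLp 2 (H₀ × H₁)) = e.symm 0 from (map_zero _).symm,
        e.symm.injective.eq_iff, Prod.ext_iff]
      intro h
      exact hv0 (Subtype.ext h.1)
    have hzker' : (T - w • 1) z = 0 := hzker
    have haz : ((algebraMap ℂ (WithLp 2 (H₀ × H₁) →L[ℂ] WithLp 2 (H₀ × H₁))) w - T) z = 0 := by
      have h2 : (algebraMap ℂ (WithLp 2 (H₀ × H₁) →L[ℂ] WithLp 2 (H₀ × H₁))) w - T
          = -(T - w • 1) := by
        rw [Algebra.algebraMap_eq_smul_one, neg_sub]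
      rw [h2, ContinuousLinearMap.neg_apply, hzker', neg_zero]
    apply hz0
    have h2 : ((↑u⁻¹ : WithLp 2 (H₀ × H₁) →L[ℂ] WithLp 2 (H₀ × H₁)) * ↑u) z = z := by
      rw [u.inv_mul, ContinuousLinearMap.one_apply]
    rw [ContinuousLinearMap.mul_apply, hu, haz, map_zero] at h2
    exact h2.symm
  · -- surjectivity
    intro w hw z
    obtain ⟨y, hy⟩ := h₁surj w hw ((e z).2)
    obtain ⟨x, hx⟩ := h₀surj w hw ((e z).1 - S y)
    refine ⟨e.symm (x, y), ?_⟩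
    rw [blockOp₂_sub_smul_apply]
    have : (e (e.symm (x, y))) = (x, y) := e.apply_symm_apply _
    rw [this]
    simp only [hx, hy]
    rw [sub_add_cancel]
    exact e.symm_apply_apply z
  · -- density
    set M := (⨆ w ∈ Ω, LinearMap.ker ((T - w • (1 : WithLp 2 (H₀ × H₁) →L[ℂ] _) : WithLp 2 (H₀ × H₁) →L[ℂ] _) : WithLp 2 (H₀ × H₁) →ₗ[ℂ] WithLp 2 (H₀ × H₁))).topologicalClosure with hM
    have hMclosed : IsClosed (M : Set (WithLp 2 (H₀ × H₁))) :=
      Submodule.isClosed_topologicalClosure _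
    have hker_le : ∀ w ∈ Ω, LinearMap.ker ((T - w • (1 : WithLp 2 (H₀ × H₁) →L[ℂ] _) : WithLp 2 (H₀ × H₁) →L[ℂ] _) : WithLp 2 (H₀ × H₁) →ₗ[ℂ] WithLp 2 (H₀ × H₁)) ≤ M := by
      intro w hw
      exact le_trans (le_iSup₂ (f := fun w _ => LinearMap.ker ((T - w • (1 : WithLp 2 (H₀ × H₁) →L[ℂ] _) : WithLp 2 (H₀ × H₁) →L[ℂ] _) : WithLp 2 (H₀ × H₁) →ₗ[ℂ] WithLp 2 (H₀ × H₁))) w hw)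
        (Submodule.le_topologicalClosure _)
    -- H₀ × 0 ⊆ M
    have hA : ∀ x : H₀, e.symm (x, 0) ∈ M := by
      set j₀ : H₀ →L[ℂ] WithLp 2 (H₀ × H₁) :=
        (e.symm : H₀ × H₁ →L[ℂ] WithLp 2 (H₀ × H₁)) ∘L inl ℂ H₀ H₁ with hj₀
      set N₀ : Submodule ℂ H₀ := M.comap (j₀ : H₀ →ₗ[ℂ] WithLp 2 (H₀ × H₁)) with hN₀
      have hN₀closed : IsClosed (N₀ : Set H₀) := hMclosed.preimage j₀.continuous
      have hN₀top : N₀ = ⊤ := by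
        rw [← top_le_iff, ← h₀dens]
        apply Submodule.topologicalClosure_minimal _ _ hN₀closed
        apply iSup₂_le
        intro w hw x hx
        show j₀ x ∈ M
        apply hker_le w hw
        apply symm_mem_ker_blockOp
        · simpa using hx
        · simp
      intro x
      have : x ∈ N₀ := hN₀top ▸ Submodule.mem_top
      exact this
    -- 0 × H₁ ⊆ M
    have hB : ∀ y : H₁, e.symm (0, y) ∈ M := by
      set j₁ : H₁ →L[ℂ] WithLp 2 (H₀ × H₁) :=
        (e.symm : H₀ × H₁ →L[ℂ] WithLp 2 (H₀ × H₁)) ∘L inr ℂ H₀ H₁ with hj₁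
      set N₁ : Submodule ℂ H₁ := M.comap (j₁ : H₁ →ₗ[ℂ] WithLp 2 (H₀ × H₁)) with hN₁
      have hN₁closed : IsClosed (N₁ : Set H₁) := hMclosed.preimage j₁.continuous
      have hN₁top : N₁ = ⊤ := by
        rw [← top_le_iff, ← h₁dens]
        apply Submodule.topologicalClosure_minimal _ _ hN₁closed
        apply iSup₂_le
        intro w hw y hy
        obtain ⟨x, hx⟩ := h₀surj w hw (-(S y))
        have hz1 : e.symm (x, y) ∈ M := by
          apply hker_le w hw
          exact symm_mem_ker_blockOp _ _ _ (by rw [hx]; abel) hy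
        have hz2 : e.symm (x, 0) ∈ M := hA x
        show j₁ y ∈ M
        have : j₁ y = e.symm (x, y) - e.symm (x, 0) := by
          show e.symm (0, y) = _
          rw [← map_sub, Prod.mk_sub_mk, sub_self, sub_zero]
        rw [this]
        exact sub_mem hz1 hz2
      intro y
      have : y ∈ N₁ := hN₁top ▸ Submodule.mem_top
      exact this
    rw [← top_le_iff]
    intro z _
    have : z = e.symm ((e z).1, 0) + e.symm (0, (e z).2) := by
      rw [← map_add, Prod.mk_add_mk, add_zero, zero_add]
      exact (e.symm_apply_apply z).symm
    rw [this]
    exact add_mem (hA _) (hB _)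
  · -- dimension
    intro w hw
    haveI hfin₀ : Module.Finite ℂ ↥(LinearMap.ker ((T₀ - w • (1:H₀ →L[ℂ] H₀) : H₀ →L[ℂ] H₀) : H₀ →ₗ[ℂ] H₀)) :=
      Module.finite_of_finrank_pos (by rw [h₀dim w hw]; norm_num)
    obtain ⟨y₁, hy₁0, hy₁span⟩ := finrank_eq_one_iff'.mp (h₁dim w hw)
    obtain ⟨x₁, hx₁⟩ := h₀surj w hw (-(S (y₁ : H₁)))
    -- the linear map (ker (T₀ - w)) × ℂ → ker (T - w)
    have hmem : ∀ p : ↥(LinearMap.ker ((T₀ - w • (1:H₀ →L[ℂ] H₀) : H₀ →L[ℂ] H₀) : H₀ →ₗ[ℂ] H₀)) × ℂ,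
        e.symm ((p.1 : H₀) + p.2 • x₁, p.2 • (y₁ : H₁)) ∈
          LinearMap.ker ((T - w • (1 : WithLp 2 (H₀ × H₁) →L[ℂ] _) : WithLp 2 (H₀ × H₁) →L[ℂ] _) : WithLp 2 (H₀ × H₁) →ₗ[ℂ] WithLp 2 (H₀ × H₁)) := by
      rintro ⟨x, t⟩
      apply symm_mem_ker_blockOp
      · have hx : (T₀ - w • 1) (x : H₀) = 0 := x.2
        have hy : (T₁ - w • 1) (y₁ : H₁) = 0 := y₁.2
        rw [map_add, map_smul, map_smul, hx, hx₁, zero_add, smul_neg, neg_add_cancel]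
      · have hy : (T₁ - w • 1) (y₁ : H₁) = 0 := y₁.2
        rw [map_smul, hy, smul_zero]
    set F : (↥(LinearMap.ker ((T₀ - w • (1:H₀ →L[ℂ] H₀) : H₀ →L[ℂ] H₀) : H₀ →ₗ[ℂ] H₀)) × ℂ) →ₗ[ℂ]
        ↥(LinearMap.ker ((T - w • (1 : WithLp 2 (H₀ × H₁) →L[ℂ] _) : WithLp 2 (H₀ × H₁) →L[ℂ] _) : WithLp 2 (H₀ × H₁) →ₗ[ℂ] WithLp 2 (H₀ × H₁))) :=
      { toFun := fun p => ⟨e.symm ((p.1 : H₀) + p.2 • x₁, p.2 • (y₁ : H₁)), hmem p⟩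
        map_add' := by
          rintro ⟨x, t⟩ ⟨x', t'⟩
          apply Subtype.ext
          show e.symm _ = e.symm _ + e.symm _
          rw [← map_add]
          congr 1
          rw [Prod.ext_iff]
          constructor
          · simp only [Prod.fst_add, Prod.snd_add, Prod.mk_add_mk, Submodule.coe_add, add_smul]
            abel
          · simp only [Prod.snd_add, Prod.mk_add_mk, add_smul]
        map_smul' := by
          rintro c ⟨x, t⟩
          apply Subtype.ext
          show e.symm _ = c • e.symm _
          rw [← map_smul]
          congr 1
          rw [Prod.ext_iff]
          constructor
          · simp only [Prod.smul_fst, Prod.smul_snd, Prod.smul_mk, Submodule.coe_smul, smul_add, smul_smul, smul_eq_mul]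
          · simp only [Prod.smul_snd, Prod.smul_mk, smul_smul, smul_eq_mul] } with hF
    have hFbij : Function.Bijective F := by
      constructor
      · rw [← LinearMap.ker_eq_bot, eq_bot_iff]
        rintro ⟨x, t⟩ hp
        have h0 : e.symm ((x : H₀) + t • x₁, t • (y₁ : H₁)) = 0 := congrArg Subtype.val hp
        rw [show (0 : WithLp 2 (H₀ × H₁)) = e.symm 0 from (map_zero _).symm,
          e.symm.injective.eq_iff, Prod.ext_iff] at h0
        have ht : t = 0 := by
          rcases smul_eq_zero.mp h0.2 with h | h
          · exact h
          · exact absurd (Subtype.ext h) hy₁0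
        have hx0 : (x : H₀) = 0 := by
          have := h0.1
          rwa [ht, zero_smul, add_zero] at this
        simp only [Submodule.mem_bot, Prod.ext_iff]
        exact ⟨Subtype.ext hx0, ht⟩
      · rintro ⟨z, hz⟩
        rw [mem_ker_blockOp] at hz
        obtain ⟨c, hc⟩ := hy₁span ⟨(e z).2, LinearMap.mem_ker.mpr hz.2⟩
        have hc' : c • (y₁ : H₁) = (e z).2 := congrArg Subtype.val hc
        have hxker : (T₀ - w • 1) ((e z).1 - c • x₁) = 0 := by
          rw [map_sub, map_smul, hx₁, smul_neg, sub_neg_eq_add, ← map_smul S, hc']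
          exact hz.1
        refine ⟨(⟨⟨(e z).1 - c • x₁, LinearMap.mem_ker.mpr hxker⟩, c⟩ : _ × ℂ), ?_⟩
        apply Subtype.ext
        show e.symm _ = z
        rw [sub_add_cancel, hc']
        exact e.symm_apply_apply z
    have := (LinearEquiv.ofBijective F hFbij).finrank_eq
    rw [← this, Module.finrank_prod, h₀dim w hw, Module.finrank_self]
end
end

section
/- Let Ω be a connected open subset of ℂ, let T_0 and T_1 be operators in B_1(Ω) acting on complex separable Hilbert spaces H_0 and H_1 respectively, and let S : H_1 → H_0 be a bounded operator satisfying T_0 S = S T_1. Then the following are equivalent: (a) S is not the zero operator; (b) S has dense range; (c) the adjoint S* is injective. -/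
noncomputable section

open ContinuousLinearMap
open scoped InnerProductSpace

/-- nonzero vector in a finrank-1 submodule -/
lemma aux_exists_ne_zero {H : Type*} [NormedAddCommGroup H] [InnerProductSpace ℂ H]
    {K : Submodule ℂ H} (hK : Module.finrank ℂ K = 1) : ∃ v ∈ K, v ≠ 0 := by
  haveI : FiniteDimensional ℂ K := .of_finrank_eq_succ hK
  haveI : Nontrivial K := Module.nontrivial_of_finrank_eq_succ hK
  obtain ⟨x, hx⟩ := exists_ne (0 : K)
  exact ⟨x, x.2, by simpa using hx⟩

lemma aux_span_eq {H : Type*} [NormedAddCommGroup H] [InnerProductSpace ℂ H]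
    {K : Submodule ℂ H} (hK : Module.finrank ℂ K = 1) {v : H} (hv : v ∈ K) (h0 : v ≠ 0) :
    K = Submodule.span ℂ {v} := by
  haveI : FiniteDimensional ℂ K := .of_finrank_eq_succ hK
  refine (Submodule.eq_of_le_of_finrank_eq ((Submodule.span_singleton_le_iff_mem _ _).2 hv) ?_).symm
  rw [finrank_span_singleton h0, hK]

set_option maxHeartbeats 1000000 in
/-- local analytic eigenvector section -/
lemma aux_section {H : Type*} [NormedAddCommGroup H] [InnerProductSpace ℂ H] [CompleteSpace H]
    (T : H →L[ℂ] H) (w₀ : ℂ)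
    (hs : Function.Surjective (T - w₀ • (1 : H →L[ℂ] H))) (γ₀ : H)
    (hγ : γ₀ ∈ LinearMap.ker ((T - w₀ • (1 : H →L[ℂ] H) : H →L[ℂ] H) : H →ₗ[ℂ] H)) :
    ∃ r > 0, ∃ u : ℂ → H,
      AnalyticOnNhd ℂ u (Metric.ball w₀ r) ∧ u w₀ = γ₀ ∧
      ∀ w ∈ Metric.ball w₀ r,
        u w ∈ LinearMap.ker ((T - w • (1 : H →L[ℂ] H) : H →L[ℂ] H) : H →ₗ[ℂ] H) ∧ (u w = 0 → γ₀ = 0) := by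
  set T' := T - w₀ • (1 : H →L[ℂ] H) with hT'
  set K := LinearMap.ker (T' : H →ₗ[ℂ] H) with hK
  haveI : CompleteSpace K := (ContinuousLinearMap.isClosed_ker T').completeSpace_coe
  set e0 : (Kᗮ : Submodule ℂ H) →L[ℂ] H := T'.comp Kᗮ.subtypeL with he0
  have hinj : LinearMap.ker (e0 : (Kᗮ : Submodule ℂ H) →ₗ[ℂ] H) = ⊥ := by
    rw [Submodule.eq_bot_iff]
    rintro ⟨x, hx⟩ hx0
    have hxK : x ∈ K := by
      simpa [e0, K] using hx0
    have : (inner ℂ x x : ℂ) = 0 := (Submodule.mem_orthogonal _ _).1 hx x hxK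
    have : x = 0 := inner_self_eq_zero.1 this
    exact Subtype.ext this
  have hsurj : LinearMap.range (e0 : (Kᗮ : Submodule ℂ H) →ₗ[ℂ] H) = ⊤ := by
    rw [Submodule.eq_top_iff']
    intro y
    obtain ⟨x, hx⟩ := hs y
    obtain ⟨k, hk, p, hp, rfl⟩ := K.exists_add_mem_mem_orthogonal x
    refine ⟨⟨p, hp⟩, ?_⟩
    have hTk : T' k = 0 := hk
    have : T' (k + p) = y := hx
    simpa [e0, map_add, hTk] using this
  set e := ContinuousLinearEquiv.ofBijective e0 hinj hsurj with he
  set R : H →L[ℂ] H := Kᗮ.subtypeL ∘L (e.symm : H →L[ℂ] (Kᗮ : Submodule ℂ H)) with hR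
  have hTR : ∀ y, T' (R y) = y := by
    intro y
    have : e0 (e.symm y) = y := e.apply_symm_apply y
    simpa [R, e0] using this
  refine ⟨(‖R‖ + 1)⁻¹, by positivity, fun w => Ring.inverse (1 - (w - w₀) • R) γ₀, ?_, ?_, ?_⟩
  · intro w hw
    have hlt : ‖(w - w₀) • R‖ < 1 := by
      rw [norm_smul]
      calc ‖w - w₀‖ * ‖R‖ ≤ ‖w - w₀‖ * (‖R‖ + 1) := by
            have := norm_nonneg (w - w₀); nlinarith [norm_nonneg R]
        _ < (‖R‖ + 1)⁻¹ * (‖R‖ + 1) := by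
            have hd : ‖w - w₀‖ < (‖R‖ + 1)⁻¹ := by
              simpa [Metric.mem_ball, dist_eq_norm] using hw
            have : (0:ℝ) < ‖R‖ + 1 := by positivity
            exact mul_lt_mul_of_pos_right hd this
        _ = 1 := by
            field_simp
    set U : (H →L[ℂ] H)ˣ := Units.oneSub ((w - w₀) • R) hlt with hU
    have hUval : (U : H →L[ℂ] H) = 1 - (w - w₀) • R := rfl
    have h1 : AnalyticAt ℂ (fun z : ℂ => (1 : H →L[ℂ] H) - (z - w₀) • R) w :=
      analyticAt_const.sub ((analyticAt_id.sub analyticAt_const).smul analyticAt_const)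
    have h2 : AnalyticAt ℂ (Ring.inverse : (H →L[ℂ] H) → (H →L[ℂ] H))
        ((1 : H →L[ℂ] H) - (w - w₀) • R) := by
      have := analyticAt_inverse (𝕜 := ℂ) U
      rwa [hUval] at this
    have hcomp : AnalyticAt ℂ
        ((Ring.inverse : (H →L[ℂ] H) → (H →L[ℂ] H)) ∘
          (fun z : ℂ => (1 : H →L[ℂ] H) - (z - w₀) • R)) w :=
      AnalyticAt.comp (g := (Ring.inverse : (H →L[ℂ] H) → (H →L[ℂ] H)))
        (f := fun z : ℂ => (1 : H →L[ℂ] H) - (z - w₀) • R) h2 h1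
    have h3 : AnalyticAt ℂ (ContinuousLinearMap.apply ℂ H γ₀ :
        (H →L[ℂ] H) →L[ℂ] H) (Ring.inverse ((1 : H →L[ℂ] H) - (w - w₀) • R)) :=
      ContinuousLinearMap.analyticAt _ _
    have h4 : AnalyticAt ℂ ((ContinuousLinearMap.apply ℂ H γ₀ : (H →L[ℂ] H) →L[ℂ] H) ∘
        ((Ring.inverse : (H →L[ℂ] H) → (H →L[ℂ] H)) ∘
          (fun z : ℂ => (1 : H →L[ℂ] H) - (z - w₀) • R))) w :=
      AnalyticAt.comp (g := ⇑(ContinuousLinearMap.apply ℂ H γ₀ : (H →L[ℂ] H) →L[ℂ] H)) h3 hcomp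
    exact h4.congr (Filter.Eventually.of_forall fun z => rfl)
  · simp
  · intro w hw
    have hlt : ‖(w - w₀) • R‖ < 1 := by
      rw [norm_smul]
      calc ‖w - w₀‖ * ‖R‖ ≤ ‖w - w₀‖ * (‖R‖ + 1) := by
            have := norm_nonneg (w - w₀); nlinarith [norm_nonneg R]
        _ < (‖R‖ + 1)⁻¹ * (‖R‖ + 1) := by
            have hd : ‖w - w₀‖ < (‖R‖ + 1)⁻¹ := by
              simpa [Metric.mem_ball, dist_eq_norm] using hw
            have : (0:ℝ) < ‖R‖ + 1 := by positivity
            exact mul_lt_mul_of_pos_right hd this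
        _ = 1 := by field_simp
    set U : (H →L[ℂ] H)ˣ := Units.oneSub ((w - w₀) • R) hlt with hU
    have hUval : (U : H →L[ℂ] H) = 1 - (w - w₀) • R := rfl
    have hinvU : Ring.inverse ((1 : H →L[ℂ] H) - (w - w₀) • R) = (↑U⁻¹ : H →L[ℂ] H) := by
      rw [← hUval, Ring.inverse_unit]
    set v : H := Ring.inverse ((1 : H →L[ℂ] H) - (w - w₀) • R) γ₀ with hv
    have hUv : ((1 : H →L[ℂ] H) - (w - w₀) • R) v = γ₀ := by
      rw [hv, hinvU, ← hUval]
      have := U.mul_inv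
      calc (U : H →L[ℂ] H) ((↑U⁻¹ : H →L[ℂ] H) γ₀)
          = ((U : H →L[ℂ] H) * (↑U⁻¹ : H →L[ℂ] H)) γ₀ := rfl
        _ = γ₀ := by rw [this]; rfl
    have hveq : v = γ₀ + (w - w₀) • R v := by
      have h5 : v - (w - w₀) • R v = γ₀ := by
        have h7 := hUv
        rwa [ContinuousLinearMap.sub_apply, ContinuousLinearMap.smul_apply,
          ContinuousLinearMap.one_apply] at h7
      rw [sub_eq_iff_eq_add] at h5
      exact h5
    constructor
    · have hTγ : T' γ₀ = 0 := hγ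
      have hT'v : T' v = (w - w₀) • v := by
        conv_lhs => rw [hveq]
        rw [map_add, hTγ, map_smul, hTR, zero_add]
      have hTw : T - w • (1 : H →L[ℂ] H) = T' - (w - w₀) • 1 := by
        rw [hT', sub_smul]; abel
      have h6 : (T - w • (1 : H →L[ℂ] H)) v = T' v - (w - w₀) • v := by
        rw [hTw]
        simp [ContinuousLinearMap.sub_apply, ContinuousLinearMap.smul_apply]
      rw [LinearMap.mem_ker, ContinuousLinearMap.coe_coe, h6, hT'v, sub_self]
    · intro h0
      have hv0 : v = 0 := h0
      rw [hv0] at hUv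
      simpa using hUv.symm

set_option maxHeartbeats 1000000

/-- For `T₀, T₁ ∈ B₁(Ω)` and a bounded intertwiner `S` (`T₀ S = S T₁`):
`S ≠ 0` iff `S` has dense range iff `S*` is injective. -/
theorem statement1
    {H₀ H₁ : Type*}
    [NormedAddCommGroup H₀] [InnerProductSpace ℂ H₀] [CompleteSpace H₀]
    [TopologicalSpace.SeparableSpace H₀]
    [NormedAddCommGroup H₁] [InnerProductSpace ℂ H₁] [CompleteSpace H₁]
    [TopologicalSpace.SeparableSpace H₁]
    (Ω : Set ℂ) (hΩopen : IsOpen Ω) (hΩconn : IsConnected Ω)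
    (T₀ : H₀ →L[ℂ] H₀) (T₁ : H₁ →L[ℂ] H₁) (S : H₁ →L[ℂ] H₀)
    (h₀ : CowenDouglas 1 Ω T₀) (h₁ : CowenDouglas 1 Ω T₁)
    (hint : T₀ ∘L S = S ∘L T₁) :
    (S ≠ 0 ↔ DenseRange S) ∧
    (S ≠ 0 ↔ Function.Injective (ContinuousLinearMap.adjoint S)) := by
  classical
  obtain ⟨wstar, hwstar⟩ := hΩconn.nonempty
  obtain ⟨γ₀, hγ₀mem, hγ₀ne⟩ := aux_exists_ne_zero (h₀.2.2.2 wstar hwstar)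
  have hvanish : (∀ w ∈ Ω, ∀ x ∈ LinearMap.ker ((T₁ - w • (1 : H₁ →L[ℂ] H₁) : H₁ →L[ℂ] H₁) : H₁ →ₗ[ℂ] H₁), S x = 0) →
      S = 0 := by
    intro hz
    have hle : (⨆ w ∈ Ω, LinearMap.ker ((T₁ - w • (1 : H₁ →L[ℂ] H₁) : H₁ →L[ℂ] H₁) : H₁ →ₗ[ℂ] H₁)) ≤ LinearMap.ker (S : H₁ →ₗ[ℂ] H₀) :=
      iSup₂_le fun w hw => fun x hx => LinearMap.mem_ker.2 (hz w hw x hx)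
    have hcl := Submodule.topologicalClosure_minimal _ hle (ContinuousLinearMap.isClosed_ker S)
    rw [h₁.2.2.1] at hcl
    ext x
    simpa using LinearMap.mem_ker.1 (hcl Submodule.mem_top)
  have key : S ≠ 0 → DenseRange S := by
    intro hS
    set P : ℂ → Prop := fun w => ∀ x ∈ LinearMap.ker ((T₁ - w • (1 : H₁ →L[ℂ] H₁) : H₁ →L[ℂ] H₁) : H₁ →ₗ[ℂ] H₁), S x = 0
      with hPdef
    set Uz : Set ℂ := {w | w ∈ Ω ∧ ∀ᶠ w' in nhds w, P w'} with hUzdef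
    have hUopen : IsOpen Uz := by
      rw [isOpen_iff_mem_nhds]
      rintro w ⟨hwΩ, hwP⟩
      filter_upwards [hΩopen.mem_nhds hwΩ, hwP.eventually_nhds] with w' h1 h2
      exact ⟨h1, h2⟩
    set Vz : Set ℂ := (closure Uz)ᶜ with hVzdef
    have hVopen : IsOpen Vz := isClosed_closure.isOpen_compl
    have hdisj : Disjoint Uz Vz :=
      Set.disjoint_left.2 fun a ha hav => hav (subset_closure ha)
    have hcover : Ω ⊆ Uz ∪ Vz := by
      intro w hw
      by_cases hcl : w ∈ closure Uz
      swap
      · exact Or.inr hcl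
      left
      obtain ⟨γ, hγmem, hγne⟩ := aux_exists_ne_zero (h₁.2.2.2 w hw)
      obtain ⟨r, hr, u, hua, hu0, hu⟩ := aux_section T₁ w (h₁.2.1 w hw) γ hγmem
      obtain ⟨ε, hε, hball⟩ := Metric.isOpen_iff.1 hΩopen w hw
      set ρ := min r ε with hρdef
      have hρpos : 0 < ρ := lt_min hr hε
      have hBr : Metric.ball w ρ ⊆ Metric.ball w r := Metric.ball_subset_ball (min_le_left _ _)
      have hBΩ : Metric.ball w ρ ⊆ Ω := fun z hz =>
        hball (Metric.ball_subset_ball (min_le_right _ _) hz)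
      obtain ⟨w₁, hw₁B, hw₁U⟩ :=
        (_root_.mem_closure_iff.1 hcl _ Metric.isOpen_ball (Metric.mem_ball_self hρpos))
      have hfa : AnalyticOnNhd ℂ (fun z => S (u z)) (Metric.ball w ρ) := by
        intro z hz
        have hc := AnalyticAt.comp (g := ⇑S) (f := u) (S.analyticAt (u z)) (hua z (hBr hz))
        exact hc.congr (Filter.Eventually.of_forall fun _ => rfl)
      have hev : (fun z => S (u z)) =ᶠ[nhds w₁] 0 := by
        filter_upwards [hw₁U.2, Metric.isOpen_ball.mem_nhds (hBr hw₁B)] with z hz1 hz2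
        exact hz1 (u z) ((hu z hz2).1)
      have hEq : Set.EqOn (fun z => S (u z)) 0 (Metric.ball w ρ) :=
        hfa.eqOn_zero_of_preconnected_of_eventuallyEq_zero
          (convex_ball w ρ).isPreconnected hw₁B hev
      refine ⟨hw, ?_⟩
      filter_upwards [Metric.isOpen_ball.mem_nhds (Metric.mem_ball_self hρpos)] with z hz
      intro x hx
      have huz := hu z (hBr hz)
      have huzne : u z ≠ 0 := fun h => hγne (huz.2 h)
      have hkz : LinearMap.ker ((T₁ - z • (1 : H₁ →L[ℂ] H₁) : H₁ →L[ℂ] H₁) : H₁ →ₗ[ℂ] H₁) = Submodule.span ℂ {u z} :=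
        aux_span_eq (h₁.2.2.2 z (hBΩ hz)) huz.1 huzne
      rw [hkz] at hx
      obtain ⟨c, rfl⟩ := Submodule.mem_span_singleton.1 hx
      have hz0 : S (u z) = 0 := hEq hz
      rw [map_smul, hz0, smul_zero]
    rcases hΩconn.isPreconnected.subset_or_subset hUopen hVopen hdisj hcover with hsub | hsub
    · exact absurd (hvanish fun w hw => (hsub hw).2.self_of_nhds) hS
    · set M := (LinearMap.range (S : H₁ →ₗ[ℂ] H₀)).topologicalClosure with hMdef
      have hMc : IsClosed (M : Set H₀) := Submodule.isClosed_topologicalClosure _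
      have hker : ∀ w ∈ Ω, LinearMap.ker ((T₀ - w • (1 : H₀ →L[ℂ] H₀) : H₀ →L[ℂ] H₀) : H₀ →ₗ[ℂ] H₀) ≤ M := by
        intro w hw
        obtain ⟨γ, hγmem, hγne⟩ := aux_exists_ne_zero (h₀.2.2.2 w hw)
        obtain ⟨r, hr, u, hua, hu0, hu⟩ := aux_section T₀ w (h₀.2.1 w hw) γ hγmem
        obtain ⟨ε, hε, hball⟩ := Metric.isOpen_iff.1 hΩopen w hw
        set ρ := min r ε with hρdef
        have hρpos : 0 < ρ := lt_min hr hε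
        have hBr : Metric.ball w ρ ⊆ Metric.ball w r := Metric.ball_subset_ball (min_le_left _ _)
        have hBΩ : Metric.ball w ρ ⊆ Ω := fun z hz =>
          hball (Metric.ball_subset_ball (min_le_right _ _) hz)
        have hnotU : w ∉ Uz := fun h => (hsub hw) (subset_closure h)
        have hfreq : ∃ᶠ w' in nhds w, ¬ P w' :=
          Filter.not_eventually.1 fun h => hnotU ⟨hw, h⟩
        have hfreq2 : ∃ᶠ z in nhds w, u z ∈ (M : Set H₀) := by
          refine (hfreq.and_eventually
            (Metric.isOpen_ball.mem_nhds (Metric.mem_ball_self hρpos))).mono ?_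
          rintro z ⟨hznP, hzB⟩
          have hznP' : ∃ x ∈ LinearMap.ker ((T₁ - z • (1 : H₁ →L[ℂ] H₁) : H₁ →L[ℂ] H₁) : H₁ →ₗ[ℂ] H₁), S x ≠ 0 := by
            by_contra hc
            push_neg at hc
            exact hznP fun x hx => hc x hx
          obtain ⟨x, hxker, hxS⟩ := hznP'
          have hTx : T₁ x = z • x := by
            have h7 := LinearMap.mem_ker.1 hxker
            rwa [ContinuousLinearMap.coe_coe, ContinuousLinearMap.sub_apply, ContinuousLinearMap.smul_apply,
              ContinuousLinearMap.one_apply, sub_eq_zero] at h7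
          have hSx : S x ∈ LinearMap.ker ((T₀ - z • (1 : H₀ →L[ℂ] H₀) : H₀ →L[ℂ] H₀) : H₀ →ₗ[ℂ] H₀) := by
            rw [LinearMap.mem_ker, ContinuousLinearMap.coe_coe, ContinuousLinearMap.sub_apply,
              ContinuousLinearMap.smul_apply, ContinuousLinearMap.one_apply]
            have h1 : T₀ (S x) = S (T₁ x) := by
              have h8 := ContinuousLinearMap.ext_iff.1 hint x
              simpa using h8
            rw [h1, hTx, map_smul, sub_self]
          have hkz : LinearMap.ker ((T₀ - z • (1 : H₀ →L[ℂ] H₀) : H₀ →L[ℂ] H₀) : H₀ →ₗ[ℂ] H₀) = Submodule.span ℂ {S x} :=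
            aux_span_eq (h₀.2.2.2 z (hBΩ hzB)) hSx hxS
          have hSxM : S x ∈ M := Submodule.le_topologicalClosure _ ⟨x, rfl⟩
          have hsubM : LinearMap.ker ((T₀ - z • (1 : H₀ →L[ℂ] H₀) : H₀ →L[ℂ] H₀) : H₀ →ₗ[ℂ] H₀) ≤ M := by
            rw [hkz]; exact (Submodule.span_singleton_le_iff_mem _ _).2 hSxM
          exact hsubM ((hu z (hBr hzB)).1)
        have hcont : Filter.Tendsto u (nhds w) (nhds γ) := by
          have hc := (hua w (Metric.mem_ball_self hr)).continuousAt
          rwa [ContinuousAt, hu0] at hc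
        have hγM : γ ∈ (M : Set H₀) :=
          hMc.closure_eq ▸ mem_closure_of_frequently_of_tendsto hfreq2 hcont
        rw [aux_span_eq (h₀.2.2.2 w hw) hγmem hγne]
        exact (Submodule.span_singleton_le_iff_mem _ _).2 hγM
      have hle : (⨆ w ∈ Ω, LinearMap.ker ((T₀ - w • (1 : H₀ →L[ℂ] H₀) : H₀ →L[ℂ] H₀) : H₀ →ₗ[ℂ] H₀)) ≤ M := iSup₂_le hker
      have htop : M = ⊤ :=
        le_antisymm le_top (h₀.2.2.1 ▸ Submodule.topologicalClosure_minimal _ hle hMc)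
      have h2 : closure (Set.range ⇑S) = Set.univ := by
        have h3 := congrArg (SetLike.coe) htop
        rw [hMdef] at h3
        simpa [Submodule.topologicalClosure_coe, LinearMap.coe_range] using h3
      exact dense_iff_closure_eq.2 h2
  have hba : DenseRange S → S ≠ 0 := by
    intro hd h0
    rw [h0] at hd
    have hrange : Set.range ⇑(0 : H₁ →L[ℂ] H₀) ⊆ {0} := by rintro _ ⟨x, rfl⟩; simp
    exact hγ₀ne (by simpa using closure_minimal hrange isClosed_singleton (hd γ₀))
  have hac : S ≠ 0 → Function.Injective ⇑(ContinuousLinearMap.adjoint S) := by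
    intro hS
    have hd := key hS
    refine (injective_iff_map_eq_zero _).2 ?_
    intro y hy
    have hz : ∀ x : H₁, (inner ℂ y (S x) : ℂ) = 0 := by
      intro x
      rw [← ContinuousLinearMap.adjoint_inner_left S x y, hy, inner_zero_left]
    have hset : Set.range ⇑S ⊆ {z : H₀ | (inner ℂ y z : ℂ) = 0} := by
      rintro _ ⟨x, rfl⟩; exact hz x
    have hcl : IsClosed {z : H₀ | (inner ℂ y z : ℂ) = 0} :=
      isClosed_eq (Continuous.inner continuous_const continuous_id) continuous_const
    have hall : ∀ z, (inner ℂ y z : ℂ) = 0 := fun z => closure_minimal hset hcl (hd z)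
    exact inner_self_eq_zero.1 (hall y)
  have hca : Function.Injective ⇑(ContinuousLinearMap.adjoint S) → S ≠ 0 := by
    intro hinj h0
    rw [h0] at hinj
    have hA0 : ContinuousLinearMap.adjoint (0 : H₁ →L[ℂ] H₀) = 0 := map_zero _
    rw [hA0] at hinj
    exact hγ₀ne (hinj (a₁ := γ₀) (a₂ := 0) (by simp))
  exact ⟨⟨key, hba⟩, ⟨hac, hca⟩⟩
end
end

section
/- Let Ω be a connected open subset of ℂ, let T_0 and T_1 be operators in B_1(Ω) on Hilbert spaces H_0 and H_1, and let S : H_1 → H_0 be a nonzero bounded operator with T_0 S = S T_1. For μ > 0 let T_μ = [[T_0, μS],[0, T_1]] on H_0 ⊕ H_1. Then for μ, μ̃ > 0, the operators T_μ and T_{μ̃} are unitarily equivalent if and only if μ = μ̃. -/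
noncomputable section

open ContinuousLinearMap
open scoped InnerProductSpace

open Metric Set Filter
open scoped Topology

namespace CDaux

variable {R : Type*} [NormedRing R]

/-- inner derivation -/
def ad (a : R) (x : R) : R := a * x - x * a

lemma ad_def (a x : R) : ad a x = a * x - x * a := rfl

lemma ad_add (a x y : R) : ad a (x + y) = ad a x + ad a y := by
  simp only [ad, mul_add, add_mul]; abel

lemma ad_mul (a x y : R) : ad a (x * y) = ad a x * y + x * ad a y := by
  simp only [ad, mul_sub, sub_mul, mul_assoc]; abel

lemma ad_zero (a : R) : ad a 0 = 0 := by simp [ad]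

lemma ad_one (a : R) : ad a 1 = 0 := by simp [ad]

lemma ad_iter_add (a : R) : ∀ (n : ℕ) (x y : R),
    (ad a)^[n] (x + y) = (ad a)^[n] x + (ad a)^[n] y := by
  intro n
  induction n with
  | zero => simp
  | succ n ih =>
    intro x y
    rw [Function.iterate_succ_apply, Function.iterate_succ_apply, Function.iterate_succ_apply,
      ad_add, ih]

lemma ad_iter_const_mul (a c : R) (hc : ad a c = 0) :
    ∀ (n : ℕ) (y : R), (ad a)^[n] (c * y) = c * (ad a)^[n] y := by
  intro n
  induction n with
  | zero => simp
  | succ n ih =>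
    intro y
    rw [Function.iterate_succ_apply, Function.iterate_succ_apply, ad_mul, hc, zero_mul, zero_add,
      ih]

lemma ad_iter_mul (a b : R) (hc : ad a (ad a b) = 0) :
    ∀ (n : ℕ) (y : R), (ad a)^[n+1] (b * y)
      = b * (ad a)^[n+1] y + (n+1 : ℕ) • (ad a b * (ad a)^[n] y) := by
  intro n
  induction n with
  | zero =>
    intro y
    simp only [Function.iterate_succ_apply, Function.iterate_zero_apply, ad_mul, one_smul,
      zero_add]
    abel
  | succ n ih =>
    intro y
    rw [Function.iterate_succ_apply (f := ad a) (x := b * y), ad_mul, ad_iter_add,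
      ad_iter_const_mul a _ hc, ih (ad a y),
      ← Function.iterate_succ_apply (f := ad a) (x := y) (n := n+1),
      ← Function.iterate_succ_apply (f := ad a) (x := y) (n := n)]
    simp only [Nat.succ_eq_add_one, succ_nsmul]
    abel

lemma ad_iter_pow_eq_zero (a b : R) (hc : ad a (ad a b) = 0) :
    ∀ (m k : ℕ), m < k → (ad a)^[k] (b ^ m) = 0 := by
  intro m
  induction m with
  | zero =>
    intro k hk
    obtain ⟨k, rfl⟩ : ∃ j, k = j + 1 := ⟨k - 1, (Nat.succ_pred_eq_of_pos hk).symm⟩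
    rw [pow_zero, Function.iterate_succ_apply, ad_one]
    induction k with
    | zero => simp
    | succ k ih => rw [Function.iterate_succ_apply, ad_zero]; exact ih (by omega)
  | succ m ihm =>
    intro k hk
    obtain ⟨j, rfl⟩ : ∃ j, k = j + 1 := ⟨k - 1, (Nat.succ_pred_eq_of_pos (by omega)).symm⟩
    rw [pow_succ']
    rw [ad_iter_mul a b hc j]
    rw [ihm (j+1) (by omega)]
    rw [ihm j (by omega)]
    simp

lemma ad_iter_pow_self (a b : R) (hc : ad a (ad a b) = 0) :
    ∀ n : ℕ, (ad a)^[n] (b ^ n) = (n.factorial) • (ad a b) ^ n := by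
  intro n
  induction n with
  | zero => simp
  | succ n ih =>
    rw [pow_succ']
    rw [ad_iter_mul a b hc n]
    rw [ad_iter_pow_eq_zero a b hc n (n+1) (by omega), mul_zero, zero_add, ih]
    rw [mul_smul_comm, smul_smul, ← pow_succ', Nat.factorial_succ]

lemma norm_ad_le (a x : R) : ‖ad a x‖ ≤ 2 * ‖a‖ * ‖x‖ := by
  calc ‖a * x - x * a‖ ≤ ‖a * x‖ + ‖x * a‖ := norm_sub_le _ _
    _ ≤ ‖a‖ * ‖x‖ + ‖x‖ * ‖a‖ := add_le_add (norm_mul_le _ _) (norm_mul_le _ _)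
    _ = 2 * ‖a‖ * ‖x‖ := by ring

lemma norm_ad_iter_le (a x : R) : ∀ n : ℕ, ‖(ad a)^[n] x‖ ≤ (2 * ‖a‖) ^ n * ‖x‖ := by
  intro n
  induction n with
  | zero => simp
  | succ n ih =>
    rw [Function.iterate_succ_apply']
    calc ‖ad a ((ad a)^[n] x)‖ ≤ 2 * ‖a‖ * ‖(ad a)^[n] x‖ := norm_ad_le _ _
      _ ≤ 2 * ‖a‖ * ((2 * ‖a‖) ^ n * ‖x‖) := by
          have h2 : (0:ℝ) ≤ 2 * ‖a‖ := by positivity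
          exact mul_le_mul_of_nonneg_left ih h2
      _ = (2 * ‖a‖) ^ (n+1) * ‖x‖ := by ring

/-- Kleinecke–Shirokov style bound: if `[a,[a,b]] = 0` then
`‖n! • [a,b]^n‖ ≤ (2‖a‖)^n ‖b^n‖`. -/
lemma ks_bound (a b : R) (hc : ad a (ad a b) = 0) (n : ℕ) :
    ‖(n.factorial) • ((ad a b) ^ n)‖ ≤ (2 * ‖a‖) ^ n * ‖b ^ n‖ := by
  rw [← ad_iter_pow_self a b hc n]
  exact norm_ad_iter_le a _ n






set_option linter.unusedSectionVars false

variable {H : Type*} [NormedAddCommGroup H] [InnerProductSpace ℂ H] [CompleteSpace H]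

/-- A surjective operator on a Hilbert space has a bounded right inverse. -/
lemma exists_right_inverse (A : H →L[ℂ] H) (hA : Function.Surjective A) :
    ∃ R : H →L[ℂ] H, A ∘L R = 1 := by
  set K := (LinearMap.ker (A : H →ₗ[ℂ] H))ᗮ with hK
  haveI : CompleteSpace K := (Submodule.isClosed_orthogonal _).completeSpace_coe
  set A' : K →L[ℂ] H := A ∘L (Submodule.subtypeL K) with hA'
  have hker : LinearMap.ker (A' : K →ₗ[ℂ] H) = ⊥ := by
    rw [Submodule.eq_bot_iff]
    rintro ⟨x, hxK⟩ hx
    have hxker : x ∈ LinearMap.ker (A : H →ₗ[ℂ] H) := by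
      simpa [A', LinearMap.mem_ker] using hx
    have : x = 0 := by
      have := (Submodule.mem_orthogonal _ x).mp hxK x hxker
      simpa [inner_self_eq_zero] using this
    simpa [Submodule.mk_eq_zero] using this
  have hrange : LinearMap.range (A' : K →ₗ[ℂ] H) = ⊤ := by
    rw [LinearMap.range_eq_top]
    intro h
    obtain ⟨x, hx⟩ := hA h
    refine ⟨⟨x - ((LinearMap.ker (A : H →ₗ[ℂ] H)).starProjection x : H),
      Submodule.sub_starProjection_mem_orthogonal (K := LinearMap.ker (A : H →ₗ[ℂ] H)) x⟩, ?_⟩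
    have hproj : A (((LinearMap.ker (A : H →ₗ[ℂ] H)).starProjection x : H)) = 0 :=
      (LinearMap.ker (A : H →ₗ[ℂ] H)).starProjection_apply_mem x
    simp [A', map_sub, hproj, hx]
  let e := ContinuousLinearEquiv.ofBijective A' hker hrange
  refine ⟨(Submodule.subtypeL K) ∘L (e.symm : H →L[ℂ] K), ?_⟩
  ext h
  exact e.apply_symm_apply h

/-- A local differentiable nonvanishing section of kernels of `T - z`. -/
lemma local_section (T : H →L[ℂ] H) (w₀ : ℂ)
    (hsurj : Function.Surjective (T - w₀ • (1 : H →L[ℂ] H)))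
    (γ₀ : H) (hγ₀ : γ₀ ∈ LinearMap.ker ((T - w₀ • (1 : H →L[ℂ] H) : H →L[ℂ] H) : H →ₗ[ℂ] H)) :
    ∃ r > 0, ∃ γ : ℂ → H, γ w₀ = γ₀ ∧
      (∀ z ∈ ball w₀ r, γ z ∈ LinearMap.ker ((T - z • (1 : H →L[ℂ] H) : H →L[ℂ] H) : H →ₗ[ℂ] H)) ∧
      DifferentiableOn ℂ γ (ball w₀ r) ∧
      (∀ z ∈ ball w₀ r, γ z = 0 → γ₀ = 0) := by
  obtain ⟨R, hR⟩ := exists_right_inverse _ hsurj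
  set r : ℝ := (‖R‖ + 1)⁻¹ with hr
  have hrpos : 0 < r := by positivity
  have hlt : ∀ z ∈ ball w₀ r, ‖(z - w₀) • R‖ < 1 := by
    intro z hz
    rw [norm_smul]
    have h1 : ‖z - w₀‖ < r := by
      simpa [mem_ball, dist_eq_norm] using hz
    calc ‖z - w₀‖ * ‖R‖ ≤ ‖z - w₀‖ * (‖R‖ + 1) := by
          apply mul_le_mul_of_nonneg_left (by linarith) (norm_nonneg _)
      _ < r * (‖R‖ + 1) := by
          apply mul_lt_mul_of_pos_right h1 (by positivity)
      _ = 1 := by rw [hr]; exact inv_mul_cancel₀ (by positivity)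
  set γ : ℂ → H := fun z => (Ring.inverse ((1 : H →L[ℂ] H) - (z - w₀) • R)) γ₀ with hγ
  have hcomp : ∀ z : ℂ, (T - w₀ • (1 : H →L[ℂ] H)) ∘L ((1 : H →L[ℂ] H) - (z - w₀) • R)
      = T - z • (1 : H →L[ℂ] H) := by
    intro z
    have h1 : (T - w₀ • (1 : H →L[ℂ] H)) ∘L ((z - w₀) • R)
        = (z - w₀) • (1 : H →L[ℂ] H) := by
      rw [ContinuousLinearMap.comp_smul, hR]
    rw [ContinuousLinearMap.comp_sub, h1, ContinuousLinearMap.one_def,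
      ContinuousLinearMap.comp_id, sub_sub, ← add_smul]
    ring_nf
  have key : ∀ z ∈ ball w₀ r, ∃ u : (H →L[ℂ] H)ˣ,
      (u : H →L[ℂ] H) = 1 - (z - w₀) • R ∧ γ z = (↑u⁻¹ : H →L[ℂ] H) γ₀ := by
    intro z hz
    refine ⟨Units.oneSub _ (hlt z hz), rfl, ?_⟩
    have : Ring.inverse ((1 : H →L[ℂ] H) - (z - w₀) • R)
        = (↑(Units.oneSub ((z - w₀) • R) (hlt z hz))⁻¹ : H →L[ℂ] H) := by
      rw [← Ring.inverse_unit (Units.oneSub ((z - w₀) • R) (hlt z hz))]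
      rfl
    rw [hγ]
    simp only []
    rw [this]
  refine ⟨r, hrpos, γ, ?_, ?_, ?_, ?_⟩
  · rw [hγ]
    simp
  · intro z hz
    obtain ⟨u, hu, hval⟩ := key z hz
    rw [LinearMap.mem_ker]
    have h2 : (T - z • (1 : H →L[ℂ] H)) (γ z)
        = (T - w₀ • (1 : H →L[ℂ] H)) (((1 : H →L[ℂ] H) - (z - w₀) • R) (γ z)) := by
      rw [← hcomp z]; rfl
    have h3 : ((1 : H →L[ℂ] H) - (z - w₀) • R) ((↑u⁻¹ : H →L[ℂ] H) γ₀) = γ₀ := by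
      rw [← hu, ← ContinuousLinearMap.mul_apply, u.mul_inv, ContinuousLinearMap.one_apply]
    rw [ContinuousLinearMap.coe_coe, h2, hval, h3]
    simpa using hγ₀
  · intro z hz
    have h1 : DifferentiableAt ℂ (fun z : ℂ => (1 : H →L[ℂ] H) - (z - w₀) • R) z := by
      apply DifferentiableAt.sub
      · exact differentiableAt_const _
      · exact (differentiableAt_id.sub (differentiableAt_const _)).smul_const R
    obtain ⟨u, hu, hval⟩ := key z hz
    have h2 : DifferentiableAt ℂ (fun w : ℂ => Ring.inverse ((1 : H →L[ℂ] H) - (w - w₀) • R)) z := by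
      have hinv : DifferentiableAt ℂ (Ring.inverse : (H →L[ℂ] H) → (H →L[ℂ] H))
          ((1 : H →L[ℂ] H) - (z - w₀) • R) := by
        rw [← hu]
        exact (hasFDerivAt_ringInverse u).differentiableAt
      exact hinv.comp z h1
    exact (h2.clm_apply (differentiableAt_const γ₀)).differentiableWithinAt
  · intro z hz h0
    obtain ⟨u, hu, hval⟩ := key z hz
    have : γ₀ = (↑u : H →L[ℂ] H) (γ z) := by
      rw [hval]
      rw [← ContinuousLinearMap.mul_apply, u.mul_inv, ContinuousLinearMap.one_apply]
    rw [this, h0, map_zero]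

/-- from `finrank = 1` get a spanning nonzero kernel vector -/
lemma ker_spanning {M : H →L[ℂ] H} (hfr : Module.finrank ℂ (LinearMap.ker (M : H →ₗ[ℂ] H)) = 1) :
    ∃ γ ∈ LinearMap.ker (M : H →ₗ[ℂ] H), γ ≠ 0 ∧ ∀ x ∈ LinearMap.ker (M : H →ₗ[ℂ] H), ∃ c : ℂ, x = c • γ := by
  have hnt : Nontrivial (LinearMap.ker (M : H →ₗ[ℂ] H)) := by
    apply Module.nontrivial_of_finrank_pos (R := ℂ)
    omega
  obtain ⟨v, hv⟩ := exists_ne (0 : LinearMap.ker (M : H →ₗ[ℂ] H))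
  have hall := (finrank_eq_one_iff_of_nonzero' v hv).mp hfr
  refine ⟨(v : H), v.2, ?_, ?_⟩
  · simpa [Submodule.coe_eq_zero] using hv
  · intro x hx
    obtain ⟨c, hc⟩ := hall ⟨x, hx⟩
    exact ⟨c, by
      have := congrArg (Subtype.val) hc
      simpa using this.symm⟩

/-- an operator vanishing on all the kernels is zero, given the density axiom. -/
lemma eq_zero_of_vanishing {K : Type*} [NormedAddCommGroup K] [NormedSpace ℂ K]
    (Ω : Set ℂ) (T : H →L[ℂ] H)
    (hdense : (⨆ w ∈ Ω, LinearMap.ker ((T - w • (1 : H →L[ℂ] H) : H →L[ℂ] H) : H →ₗ[ℂ] H)).topologicalClosure = ⊤)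
    (G : H →L[ℂ] K)
    (hG : ∀ w ∈ Ω, ∀ x ∈ LinearMap.ker ((T - w • (1 : H →L[ℂ] H) : H →L[ℂ] H) : H →ₗ[ℂ] H), G x = 0) :
    G = 0 := by
  have h1 : (⨆ w ∈ Ω, LinearMap.ker ((T - w • (1 : H →L[ℂ] H) : H →L[ℂ] H) : H →ₗ[ℂ] H)) ≤ LinearMap.ker (G : H →ₗ[ℂ] K) := by
    apply iSup_le
    intro w
    apply iSup_le
    intro hw
    intro x hx
    exact hG w hw x hx
  have h2 := Submodule.topologicalClosure_minimal _ h1 (isClosed_ker G)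
  rw [hdense] at h2
  ext x
  have : x ∈ LinearMap.ker (G : H →ₗ[ℂ] K) := h2 (Submodule.mem_top)
  simpa using this

/-- a closed-range operator whose range contains all kernels is surjective. -/
lemma surj_of_range_closed_contains (Ω : Set ℂ) (T : H →L[ℂ] H)
    (hdense : (⨆ w ∈ Ω, LinearMap.ker ((T - w • (1 : H →L[ℂ] H) : H →L[ℂ] H) : H →ₗ[ℂ] H)).topologicalClosure = ⊤)
    {K : Type*} [NormedAddCommGroup K] [NormedSpace ℂ K] (G : K →L[ℂ] H)
    (hclosed : IsClosed (LinearMap.range (G : K →ₗ[ℂ] H) : Set H))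
    (hcont : ∀ w ∈ Ω, LinearMap.ker ((T - w • (1 : H →L[ℂ] H) : H →L[ℂ] H) : H →ₗ[ℂ] H) ≤ LinearMap.range (G : K →ₗ[ℂ] H)) :
    Function.Surjective G := by
  have h1 : (⨆ w ∈ Ω, LinearMap.ker ((T - w • (1 : H →L[ℂ] H) : H →L[ℂ] H) : H →ₗ[ℂ] H)) ≤ LinearMap.range (G : K →ₗ[ℂ] H) := by
    apply iSup_le; intro w; apply iSup_le; intro hw; exact hcont w hw
  have h2 := Submodule.topologicalClosure_minimal _ h1 hclosed
  rw [hdense] at h2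
  intro x
  exact h2 (Submodule.mem_top : x ∈ ⊤)

/-- eigenvalues of an operator with superexponentially small powers vanish. -/
lemma eigenvalue_zero {C : H →L[ℂ] H} {v : H} {φ : ℂ} (hv : v ≠ 0) (heig : C v = φ • v)
    {Kc : ℝ} (hKc : 0 ≤ Kc)
    (hn : ∀ n : ℕ, (n.factorial : ℝ) * ‖C ^ n‖ ≤ Kc ^ n) : φ = 0 := by
  by_contra hφ
  have hpow : ∀ n : ℕ, (C ^ n) v = φ ^ n • v := by
    intro n
    induction n with
    | zero => simp
    | succ n ih =>
      rw [pow_succ, ContinuousLinearMap.mul_apply, heig, map_smul, ih, smul_smul, ← pow_succ']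
  have hb : ∀ n : ℕ, ‖φ‖ ^ n * (n.factorial : ℝ) ≤ Kc ^ n := by
    intro n
    have h1 : ‖(C ^ n) v‖ ≤ ‖C ^ n‖ * ‖v‖ := (C ^ n).le_opNorm v
    rw [hpow n, norm_smul, norm_pow] at h1
    have hvpos : 0 < ‖v‖ := norm_pos_iff.mpr hv
    have h2 : ‖φ‖ ^ n ≤ ‖C ^ n‖ := by
      have := le_of_mul_le_mul_right h1 hvpos
      exact this
    calc ‖φ‖ ^ n * (n.factorial : ℝ) ≤ ‖C ^ n‖ * (n.factorial : ℝ) := by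
          apply mul_le_mul_of_nonneg_right h2 (by positivity)
      _ = (n.factorial : ℝ) * ‖C ^ n‖ := by ring
      _ ≤ Kc ^ n := hn n
  -- now contradiction: (Kc/‖φ‖)^n / n! → 0
  have hφpos : 0 < ‖φ‖ := norm_pos_iff.mpr hφ
  have htend := FloorSemiring.tendsto_pow_div_factorial_atTop (K := ℝ) (Kc / ‖φ‖)
  have hev : ∀ᶠ n : ℕ in Filter.atTop, (Kc / ‖φ‖) ^ n / (n.factorial : ℝ) < 1 := by
    have := htend.eventually (gt_mem_nhds (by norm_num : (0:ℝ) < 1))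
    exact this
  obtain ⟨n, hlt⟩ := hev.exists
  have hge : (1:ℝ) ≤ (Kc / ‖φ‖) ^ n / (n.factorial : ℝ) := by
    rw [div_pow, div_div, le_div_iff₀ (by positivity), one_mul]
    exact hb n
  rw [div_pow] at hge hlt
  linarith

/-- spanning from a given nonzero kernel vector -/
lemma ker_span_of_ne {M : H →L[ℂ] H} (hfr : Module.finrank ℂ (LinearMap.ker (M : H →ₗ[ℂ] H)) = 1)
    {γ : H} (hγ : γ ∈ LinearMap.ker (M : H →ₗ[ℂ] H)) (hne : γ ≠ 0) :
    ∀ x ∈ LinearMap.ker (M : H →ₗ[ℂ] H), ∃ c : ℂ, x = c • γ := by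
  have hv : (⟨γ, hγ⟩ : LinearMap.ker (M : H →ₗ[ℂ] H)) ≠ 0 := by
    simpa [Submodule.mk_eq_zero] using hne
  have hall := (finrank_eq_one_iff_of_nonzero' _ hv).mp hfr
  intro x hx
  obtain ⟨c, hc⟩ := hall ⟨x, hx⟩
  exact ⟨c, by simpa using (congrArg Subtype.val hc).symm⟩

/-- Key propagation lemma: if a bounded operator kills the (1-dimensional) kernels
`ker (T - z)` frequently near some point of `Ω`, it kills all of them. -/
lemma kills_propagate (Ω : Set ℂ) (hΩ : IsOpen Ω) (hconn : IsPreconnected Ω)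
    (T : H →L[ℂ] H)
    (hsurj : ∀ w ∈ Ω, Function.Surjective (T - w • (1 : H →L[ℂ] H)))
    (hdim : ∀ w ∈ Ω, Module.finrank ℂ (LinearMap.ker ((T - w • (1 : H →L[ℂ] H) : H →L[ℂ] H) : H →ₗ[ℂ] H)) = 1)
    {K : Type*} [NormedAddCommGroup K] [InnerProductSpace ℂ K]
    (G : H →L[ℂ] K)
    (hex : ∃ w₀ ∈ Ω, ∃ᶠ z in 𝓝[≠] w₀,
      z ∈ Ω ∧ ∀ x ∈ LinearMap.ker ((T - z • (1 : H →L[ℂ] H) : H →L[ℂ] H) : H →ₗ[ℂ] H), G x = 0) :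
    ∀ w ∈ Ω, ∀ x ∈ LinearMap.ker ((T - w • (1 : H →L[ℂ] H) : H →L[ℂ] H) : H →ₗ[ℂ] H), G x = 0 := by
  set P : ℂ → Prop :=
    fun z => z ∈ Ω ∧ ∀ x ∈ LinearMap.ker ((T - z • (1 : H →L[ℂ] H) : H →L[ℂ] H) : H →ₗ[ℂ] H), G x = 0 with hP
  set Q : Set ℂ := {w | w ∈ Ω ∧ ∃ᶠ z in 𝓝[≠] w, P z} with hQ
  -- membership in Q from a surrounding ball of P's
  have hQball : ∀ (w : ℂ) (r : ℝ), ball w r ⊆ Ω → (∀ z ∈ ball w r, P z) →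
      ∀ z ∈ ball w r, z ∈ Q := by
    intro w r hball hPball z hz
    refine ⟨hball hz, ?_⟩
    have hev : ∀ᶠ z' in 𝓝[≠] z, P z' := by
      apply eventually_nhdsWithin_of_eventually_nhds
      filter_upwards [isOpen_ball.mem_nhds hz] with z' hz' using hPball z' hz'
    exact hev.frequently
  -- the key local step
  have key : ∀ w ∈ Ω, ∃ r > 0, ball w r ⊆ Ω ∧
      ((∃ q ∈ ball w r, q ∈ Q) → ∀ z ∈ ball w r, P z) := by
    intro w hw
    obtain ⟨γ₀, hγ₀ker, hγ₀ne, -⟩ := ker_spanning (hdim w hw)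
    obtain ⟨r₀, hr₀, γ, hγw, hγker, hγdiff, hγne⟩ := local_section T w (hsurj w hw) γ₀ hγ₀ker
    obtain ⟨r₁, hr₁, hball₁⟩ := Metric.isOpen_iff.mp hΩ w hw
    have hsub : ball w (min r₀ r₁) ⊆ ball w r₀ := ball_subset_ball (min_le_left _ _)
    have hsubΩ : ball w (min r₀ r₁) ⊆ Ω :=
      fun z hz => hball₁ (ball_subset_ball (min_le_right _ _) hz)
    refine ⟨min r₀ r₁, lt_min hr₀ hr₁, hsubΩ, ?_⟩
    rintro ⟨q, hqball, hqΩ, hqfreq⟩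
    -- analytic functions
    have hanal : ∀ y : K, AnalyticOnNhd ℂ (fun z => (inner ℂ y (G (γ z)) : ℂ)) (ball w (min r₀ r₁)) := by
      intro y
      apply DifferentiableOn.analyticOnNhd _ isOpen_ball
      intro z hz
      have h1 : DifferentiableWithinAt ℂ γ (ball w (min r₀ r₁)) z :=
        (hγdiff z (hsub hz)).mono hsub
      exact ((innerSL ℂ y).differentiable.differentiableAt.comp_differentiableWithinAt z
        ((G.differentiable.differentiableAt).comp_differentiableWithinAt z h1))
    have hfreq : ∀ y : K, ∃ᶠ z in 𝓝[≠] q, (inner ℂ y (G (γ z)) : ℂ) = 0 := by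
      intro y
      have hev : ∀ᶠ z in 𝓝[≠] q, z ∈ ball w (min r₀ r₁) := by
        apply eventually_nhdsWithin_of_eventually_nhds
        exact isOpen_ball.mem_nhds hqball
      refine ((hqfreq.and_eventually hev).mono ?_)
      rintro z ⟨⟨hzΩ, hzker⟩, hzball⟩
      rw [hzker (γ z) (hγker z (hsub hzball)), inner_zero_right]
    have hzero : ∀ z ∈ ball w (min r₀ r₁), G (γ z) = 0 := by
      intro z hz
      have heq := AnalyticOnNhd.eqOn_zero_of_preconnected_of_frequently_eq_zero
        (hanal (G (γ z))) ((convex_ball w (min r₀ r₁)).isPreconnected) hqball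
        (hfreq (G (γ z)))
      have := heq hz
      simpa [inner_self_eq_zero] using this
    intro z hz
    refine ⟨hsubΩ hz, ?_⟩
    intro x hx
    have hγzne : γ z ≠ 0 := fun h => hγ₀ne (hγne z (hsub hz) h)
    obtain ⟨c, hc⟩ := ker_span_of_ne (hdim z (hsubΩ hz)) (hγker z (hsub hz)) hγzne x hx
    rw [hc, map_smul, hzero z hz, smul_zero]
  -- openness of Q
  have hQopen : IsOpen Q := by
    rw [Metric.isOpen_iff]
    intro w hwQ
    obtain ⟨r, hr, hballΩ, hkey⟩ := key w hwQ.1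
    refine ⟨r, hr, fun z hz => ?_⟩
    exact hQball w r hballΩ (hkey ⟨w, mem_ball_self hr, hwQ⟩) z hz
  -- closedness of Q in Ω
  have hQclosed : ∀ w ∈ Ω, w ∈ closure Q → w ∈ Q := by
    intro w hw hwc
    obtain ⟨r, hr, hballΩ, hkey⟩ := key w hw
    obtain ⟨q, hq1, hq2⟩ := Metric.mem_closure_iff.mp hwc r hr
    have hqball : q ∈ ball w r := by
      rw [mem_ball, dist_comm]
      exact hq2
    exact hQball w r hballΩ (hkey ⟨q, hqball, hq1⟩) w (mem_ball_self hr)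
  -- preconnectedness conclusion : Ω ⊆ Q
  have hQfull : Ω ⊆ Q := by
    obtain ⟨w₀, hw₀Ω, hw₀f⟩ := hex
    have hw₀Q : w₀ ∈ Q := ⟨hw₀Ω, hw₀f⟩
    by_contra hcon
    have hv : (Ω ∩ (closure Q)ᶜ).Nonempty := by
      rw [Set.not_subset] at hcon
      obtain ⟨x, hxΩ, hxQ⟩ := hcon
      refine ⟨x, hxΩ, fun hxc => hxQ (hQclosed x hxΩ hxc)⟩
    have hcover : Ω ⊆ Q ∪ (closure Q)ᶜ := by
      intro x hxΩ
      by_cases hxc : x ∈ closure Q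
      · exact Or.inl (hQclosed x hxΩ hxc)
      · exact Or.inr hxc
    have := hconn Q (closure Q)ᶜ hQopen (isClosed_closure.isOpen_compl) hcover
      ⟨w₀, hw₀Ω, hw₀Q⟩ hv
    obtain ⟨x, -, hxQ, hxc⟩ := this
    exact hxc (subset_closure hxQ)
  -- finish
  intro w hw
  obtain ⟨r, hr, hballΩ, hkey⟩ := key w hw
  exact (hkey ⟨w, mem_ball_self hr, hQfull hw⟩ w (mem_ball_self hr)).2

end CDaux

set_option maxHeartbeats 2000000


/-- Two bounded operators are unitarily equivalent if there is a unitary `U` with `U A = B U`. -/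
def UnitEquiv {H H' : Type*} [NormedAddCommGroup H] [InnerProductSpace ℂ H]
    [NormedAddCommGroup H'] [InnerProductSpace ℂ H']
    (A : H →L[ℂ] H) (B : H' →L[ℂ] H') : Prop :=
  ∃ U : H ≃ₗᵢ[ℂ] H', ∀ x, U (A x) = B (U x)

/-- For a nonzero intertwiner `S` and positive reals `μ, μ̃`, the operators
`[[T₀, μS], [0, T₁]]` and `[[T₀, μ̃S], [0, T₁]]` are unitarily equivalent iff `μ = μ̃`. -/
theorem statement6
    {H₀ H₁ : Type*}
    [NormedAddCommGroup H₀] [InnerProductSpace ℂ H₀] [CompleteSpace H₀]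
    [TopologicalSpace.SeparableSpace H₀]
    [NormedAddCommGroup H₁] [InnerProductSpace ℂ H₁] [CompleteSpace H₁]
    [TopologicalSpace.SeparableSpace H₁]
    (Ω : Set ℂ) (hΩopen : IsOpen Ω) (hΩconn : IsConnected Ω)
    (T₀ : H₀ →L[ℂ] H₀) (T₁ : H₁ →L[ℂ] H₁) (S : H₁ →L[ℂ] H₀)
    (h₀ : CowenDouglas 1 Ω T₀) (h₁ : CowenDouglas 1 Ω T₁)
    (hS : S ≠ 0) (hint : T₀ ∘L S = S ∘L T₁)
    (μ μ' : ℝ) (hμ : 0 < μ) (hμ' : 0 < μ') :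
    UnitEquiv (blockOp₂ T₀ ((μ : ℂ) • S) T₁) (blockOp₂ T₀ ((μ' : ℂ) • S) T₁) ↔
      μ = μ' := by
  obtain ⟨-, h₀surj, h₀dense, h₀dim⟩ := h₀
  obtain ⟨-, h₁surj, h₁dense, h₁dim⟩ := h₁
  constructor
  swap
  · rintro rfl
    exact ⟨LinearIsometryEquiv.refl ℂ _, fun x => rfl⟩
  rintro ⟨u, hu⟩
  set e := WithLp.prodContinuousLinearEquiv 2 ℂ H₀ H₁ with he
  set mk : H₀ → H₁ → WithLp 2 (H₀ × H₁) := fun x y => e.symm (x, y) with hmk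
  -- injectivity of mk
  have hmk_inj : ∀ {a a' : H₀} {b b' : H₁}, mk a b = mk a' b' → a = a' ∧ b = b' := by
    intro a a' b b' h
    have := congrArg e h
    simp only [hmk, ContinuousLinearEquiv.apply_symm_apply] at this
    exact ⟨congrArg Prod.fst this, congrArg Prod.snd this⟩
  -- action of the block operators
  have hact : ∀ (S' : H₁ →L[ℂ] H₀) (x : H₀) (y : H₁),
      blockOp₂ T₀ S' T₁ (mk x y) = mk (T₀ x + S' y) (T₁ y) := by
    intro S' x y
    simp [blockOp₂, hmk, he]
  -- block components of u
  set A : H₀ → H₀ := fun x => (e (u (mk x 0))).1 with hA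
  set W : H₀ → H₁ := fun x => (e (u (mk x 0))).2 with hW
  set V : H₁ → H₀ := fun y => (e (u (mk 0 y))).1 with hV
  set Dd : H₁ → H₁ := fun y => (e (u (mk 0 y))).2 with hD
  have hmk_decomp : ∀ ξ : WithLp 2 (H₀ × H₁), ξ = mk (e ξ).1 (e ξ).2 :=
    fun ξ => (e.symm_apply_apply ξ).symm
  have hu₀ : ∀ x, u (mk x 0) = mk (A x) (W x) := fun x => hmk_decomp _
  have hu₁ : ∀ y, u (mk 0 y) = mk (V y) (Dd y) := fun y => hmk_decomp _
  have hmk_add : ∀ (x x' : H₀) (y y' : H₁), mk x y + mk x' y' = mk (x + x') (y + y') := by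
    intro x x' y y'
    rw [hmk]
    simp only [← map_add]
    rfl
  have hmk_split : ∀ x y, mk x y = mk x 0 + mk 0 y := by
    intro x y
    rw [hmk_add]
    simp
  have hublock : ∀ x y, u (mk x y) = mk (A x + V y) (W x + Dd y) := by
    intro x y
    rw [hmk_split x y, map_add, hu₀, hu₁, hmk_add]
  -- continuous linear versions of the blocks
  set Ucl : WithLp 2 (H₀ × H₁) →L[ℂ] WithLp 2 (H₀ × H₁) :=
    (u.toContinuousLinearEquiv : WithLp 2 (H₀ × H₁) →L[ℂ] WithLp 2 (H₀ × H₁)) with hUcl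
  set A_L : H₀ →L[ℂ] H₀ :=
    fst ℂ H₀ H₁ ∘L (e : WithLp 2 (H₀ × H₁) →L[ℂ] H₀ × H₁) ∘L Ucl ∘L
      (e.symm : H₀ × H₁ →L[ℂ] WithLp 2 (H₀ × H₁)) ∘L inl ℂ H₀ H₁ with hA_L
  set W_L : H₀ →L[ℂ] H₁ :=
    snd ℂ H₀ H₁ ∘L (e : WithLp 2 (H₀ × H₁) →L[ℂ] H₀ × H₁) ∘L Ucl ∘L
      (e.symm : H₀ × H₁ →L[ℂ] WithLp 2 (H₀ × H₁)) ∘L inl ℂ H₀ H₁ with hW_L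
  have hAL : ∀ x, A_L x = A x := fun x => rfl
  have hWL : ∀ x, W_L x = W x := fun x => rfl
  -- the four intertwining equations
  have hEq0 : ∀ x, A (T₀ x) = T₀ (A x) + (μ':ℂ) • S (W x) ∧ W (T₀ x) = T₁ (W x) := by
    intro x
    have h := hu (mk x 0)
    rw [hact] at h
    simp only [map_zero, add_zero] at h
    rw [hu₀, hu₀, hact] at h
    have h2 := hmk_inj h
    simpa using h2
  have hEq1 : ∀ y, A ((μ:ℂ) • S y) + V (T₁ y) = T₀ (V y) + (μ':ℂ) • S (Dd y) ∧
      W ((μ:ℂ) • S y) + Dd (T₁ y) = T₁ (Dd y) := by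
    intro y
    have h := hu (mk 0 y)
    rw [hact] at h
    simp only [map_zero, zero_add, smul_apply] at h
    rw [hu₁] at h
    rw [hmk_split ((μ:ℂ) • S y) (T₁ y), map_add, hu₀, hu₁, hmk_add, hact] at h
    have h2 := hmk_inj h
    simpa using h2
  -- operator versions
  have op3 : W_L ∘L T₀ = T₁ ∘L W_L := by
    ext x
    simp only [comp_apply, hWL]
    exact (hEq0 x).2
  have opc : CDaux.ad T₀ A_L = -((μ':ℂ) • (S ∘L W_L)) := by
    ext x
    rw [CDaux.ad]
    simp only [ContinuousLinearMap.sub_apply, ContinuousLinearMap.mul_apply, neg_apply,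
      smul_apply, comp_apply, hAL, hWL]
    rw [(hEq0 x).1]
    abel
  -- commutation needed for Kleinecke–Shirokov
  have hintp : ∀ z, T₀ (S z) = S (T₁ z) := by
    intro z
    have h := congrArg (fun f : H₁ →L[ℂ] H₀ => f z) hint
    simpa using h
  have hSWcomm : T₀ ∘L (S ∘L W_L) = (S ∘L W_L) ∘L T₀ := by
    ext x
    simp only [comp_apply, hWL]
    rw [hintp (W x), (hEq0 x).2]
  have hX : T₀ * (S ∘L W_L) = (S ∘L W_L) * T₀ := by
    rw [ContinuousLinearMap.mul_def, ContinuousLinearMap.mul_def]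
    exact hSWcomm
  have hadad : CDaux.ad T₀ (CDaux.ad T₀ A_L) = 0 := by
    rw [opc, CDaux.ad, mul_neg, neg_mul, mul_smul_comm, smul_mul_assoc, hX]
    abel
  -- the Kleinecke–Shirokov bound
  have hCbound : ∀ n : ℕ, (n.factorial : ℝ) * ‖(CDaux.ad T₀ A_L) ^ n‖
      ≤ (2 * ‖T₀‖ * ‖A_L‖) ^ n := by
    intro n
    rcases Nat.eq_zero_or_pos n with hn | hn
    · subst hn
      simp only [Nat.factorial_zero, pow_zero, Nat.cast_one, one_mul]
      rw [ContinuousLinearMap.one_def]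
      exact ContinuousLinearMap.norm_id_le
    · have h1 := CDaux.ks_bound T₀ A_L hadad n
      have h2 : ‖(n.factorial) • ((CDaux.ad T₀ A_L) ^ n)‖
          = (n.factorial : ℝ) * ‖(CDaux.ad T₀ A_L) ^ n‖ := by
        rw [← Nat.cast_smul_eq_nsmul ℂ, norm_smul]
        simp
      rw [h2] at h1
      calc (n.factorial : ℝ) * ‖(CDaux.ad T₀ A_L) ^ n‖
          ≤ (2 * ‖T₀‖) ^ n * ‖A_L ^ n‖ := h1
        _ ≤ (2 * ‖T₀‖) ^ n * ‖A_L‖ ^ n := by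
            apply mul_le_mul_of_nonneg_left (norm_pow_le' A_L hn) (by positivity)
        _ = (2 * ‖T₀‖ * ‖A_L‖) ^ n := by ring
  -- Cc commutes with T₀ pointwise
  have hCT : ∀ z, T₀ ((CDaux.ad T₀ A_L) z) = (CDaux.ad T₀ A_L) (T₀ z) := by
    intro z
    have h := congrArg (fun f : H₀ →L[ℂ] H₀ => f z) hadad
    rw [CDaux.ad_def] at h
    simp only [ContinuousLinearMap.sub_apply, ContinuousLinearMap.mul_apply,
      ContinuousLinearMap.zero_apply] at h
    exact sub_eq_zero.mp h
  -- the derivation kills all kernels of T₀ - w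
  have hCkills : ∀ w ∈ Ω, ∀ x ∈ LinearMap.ker ((T₀ - w • (1 : H₀ →L[ℂ] H₀) : H₀ →L[ℂ] H₀) : H₀ →ₗ[ℂ] H₀),
      (CDaux.ad T₀ A_L) x = 0 := by
    intro w hw
    obtain ⟨γ₀, hγker, hγne, hspan⟩ := CDaux.ker_spanning (h₀dim w hw)
    have hγ0 : (T₀ - w • (1 : H₀ →L[ℂ] H₀)) γ₀ = 0 := hγker
    have hCγmem : (CDaux.ad T₀ A_L) γ₀ ∈ LinearMap.ker ((T₀ - w • (1 : H₀ →L[ℂ] H₀) : H₀ →L[ℂ] H₀) : H₀ →ₗ[ℂ] H₀) := by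
      rw [LinearMap.mem_ker]
      have h1 : (T₀ - w • (1 : H₀ →L[ℂ] H₀)) ((CDaux.ad T₀ A_L) γ₀)
          = (CDaux.ad T₀ A_L) ((T₀ - w • (1 : H₀ →L[ℂ] H₀)) γ₀) := by
        simp only [ContinuousLinearMap.sub_apply, ContinuousLinearMap.smul_apply,
          ContinuousLinearMap.one_apply, map_sub, map_smul, hCT]
      rw [ContinuousLinearMap.coe_coe, h1, hγ0, map_zero]
    obtain ⟨φ, hφ⟩ := hspan _ hCγmem
    have hφ0 : φ = 0 := by
      refine CDaux.eigenvalue_zero hγne ?_ (by positivity : (0:ℝ) ≤ 2 * ‖T₀‖ * ‖A_L‖) hCbound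
      rw [hφ]
    have hCγ0 : (CDaux.ad T₀ A_L) γ₀ = 0 := by rw [hφ, hφ0, zero_smul]
    intro x hx
    obtain ⟨c, hc⟩ := hspan x hx
    rw [hc, map_smul, hCγ0, smul_zero]
  have hCzero : CDaux.ad T₀ A_L = 0 :=
    CDaux.eq_zero_of_vanishing Ω T₀ h₀dense _ hCkills
  -- consequences : S ∘ W = 0 and A commutes with T₀
  have hSW0 : ∀ x, S (W x) = 0 := by
    intro x
    have h : -((μ':ℂ) • (S ∘L W_L)) = 0 := by rw [← opc, hCzero]
    have h2 : (μ':ℂ) • (S ∘L W_L) = 0 := by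
      have := congrArg Neg.neg h
      simpa using this
    have h3 : (S ∘L W_L) = 0 := by
      rcases smul_eq_zero.mp h2 with h | h
      · exfalso
        have : (μ' : ℂ) ≠ 0 := by
          simp only [ne_eq, Complex.ofReal_eq_zero]
          exact ne_of_gt hμ'
        exact this h
      · exact h
    have := congrArg (fun f : H₀ →L[ℂ] H₀ => f x) h3
    simpa [hWL] using this
  have hAcommT : ∀ x, T₀ (A_L x) = A_L (T₀ x) := by
    intro x
    have h := congrArg (fun f : H₀ →L[ℂ] H₀ => f x) hCzero
    rw [CDaux.ad_def] at h
    simp only [ContinuousLinearMap.sub_apply, ContinuousLinearMap.mul_apply,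
      ContinuousLinearMap.zero_apply] at h
    exact sub_eq_zero.mp h
  -- W maps kernels to kernels
  have hWkerpres : ∀ w ∈ Ω, ∀ x ∈ LinearMap.ker ((T₀ - w • (1 : H₀ →L[ℂ] H₀) : H₀ →L[ℂ] H₀) : H₀ →ₗ[ℂ] H₀),
      W_L x ∈ LinearMap.ker ((T₁ - w • (1 : H₁ →L[ℂ] H₁) : H₁ →L[ℂ] H₁) : H₁ →ₗ[ℂ] H₁) := by
    intro w hw x hx
    rw [LinearMap.mem_ker, ContinuousLinearMap.coe_coe] at hx ⊢
    have hop3 : T₁ (W_L x) = W_L (T₀ x) := by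
      have := congrArg (fun f : H₀ →L[ℂ] H₁ => f x) op3
      simpa using this.symm
    simp only [ContinuousLinearMap.sub_apply, ContinuousLinearMap.smul_apply,
      ContinuousLinearMap.one_apply] at hx ⊢
    rw [hop3, ← map_smul, ← map_sub, hx, map_zero]
  -- S does not kill kernels of T₁ - z frequently near every point
  have hfreqS : ∀ w ∈ Ω, ∃ᶠ z in 𝓝[≠] w, z ∈ Ω ∧
      ∃ x₁ ∈ LinearMap.ker ((T₁ - z • (1 : H₁ →L[ℂ] H₁) : H₁ →L[ℂ] H₁) : H₁ →ₗ[ℂ] H₁), S x₁ ≠ 0 := by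
    intro w hw
    by_contra hcon
    rw [Filter.not_frequently] at hcon
    have hevΩ : ∀ᶠ z in 𝓝[≠] w, z ∈ Ω :=
      eventually_nhdsWithin_of_eventually_nhds (hΩopen.eventually_mem hw)
    have hev : ∀ᶠ z in 𝓝[≠] w, z ∈ Ω ∧
        ∀ x ∈ LinearMap.ker ((T₁ - z • (1 : H₁ →L[ℂ] H₁) : H₁ →L[ℂ] H₁) : H₁ →ₗ[ℂ] H₁), S x = 0 := by
      filter_upwards [hcon, hevΩ] with z h1 h2
      refine ⟨h2, ?_⟩
      intro x hx
      by_contra hx0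
      exact h1 ⟨h2, x, hx, hx0⟩
    have hkills := CDaux.kills_propagate Ω hΩopen hΩconn.isPreconnected T₁ h₁surj h₁dim S
      ⟨w, hw, hev.frequently⟩
    exact hS (CDaux.eq_zero_of_vanishing Ω T₁ h₁dense S hkills)
  -- hence W kills kernels frequently near every point
  have hWfreq : ∀ w ∈ Ω, ∃ᶠ z in 𝓝[≠] w, z ∈ Ω ∧
      ∀ x ∈ LinearMap.ker ((T₀ - z • (1 : H₀ →L[ℂ] H₀) : H₀ →L[ℂ] H₀) : H₀ →ₗ[ℂ] H₀), W_L x = 0 := by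
    intro w hw
    refine (hfreqS w hw).mono ?_
    rintro z ⟨hzΩ, x₁, hx₁ker, hx₁ne⟩
    refine ⟨hzΩ, ?_⟩
    intro x hx
    have hx₁0 : x₁ ≠ 0 := fun h => hx₁ne (by rw [h, map_zero])
    obtain ⟨c, hc⟩ := CDaux.ker_span_of_ne (h₁dim z hzΩ) hx₁ker hx₁0 _
      (hWkerpres z hzΩ x hx)
    have hSWx : S (W_L x) = 0 := by rw [hWL]; exact hSW0 x
    rw [hc, map_smul] at hSWx
    rcases smul_eq_zero.mp hSWx with h | h
    · rw [hc, h, zero_smul]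
    · exact absurd h hx₁ne
  -- W is zero
  have hWall := CDaux.kills_propagate Ω hΩopen hΩconn.isPreconnected T₀ h₀surj h₀dim W_L
    (by
      obtain ⟨w₀, hw₀⟩ := hΩconn.nonempty
      exact ⟨w₀, hw₀, hWfreq w₀ hw₀⟩)
  have hWzero : W_L = 0 := CDaux.eq_zero_of_vanishing Ω T₀ h₀dense W_L hWall
  have hW0 : ∀ x, W x = 0 := by
    intro x
    rw [← hWL, hWzero]
    rfl
  -- inner products
  have hinner : ∀ (x x' : H₀) (y y' : H₁),
      ⟪mk x y, mk x' y'⟫_ℂ = ⟪x, x'⟫_ℂ + ⟪y, y'⟫_ℂ := by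
    intro x x' y y'
    rw [WithLp.prod_inner_apply]
    rfl
  have huinner : ∀ ξ η, ⟪u ξ, u η⟫_ℂ = ⟪ξ, η⟫_ℂ := fun ξ η => u.inner_map_map ξ η
  -- A is an isometry
  have hAiso : ∀ x x', ⟪A x, A x'⟫_ℂ = ⟪x, x'⟫_ℂ := by
    intro x x'
    have h := huinner (mk x 0) (mk x' 0)
    rw [hu₀, hu₀, hinner, hinner] at h
    rw [hW0, hW0] at h
    simpa using h
  have hAnorm : ∀ x, ‖A x‖ = ‖x‖ := by
    intro x
    have h := hAiso x x
    rw [inner_self_eq_norm_sq_to_K, inner_self_eq_norm_sq_to_K] at h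
    have h2 : (‖A x‖ : ℝ) ^ 2 = ‖x‖ ^ 2 := by exact_mod_cast h
    nlinarith [norm_nonneg (A x), norm_nonneg x]
  have hAinj : ∀ x, A x = 0 → x = 0 := by
    intro x hx
    have := hAnorm x
    rw [hx, norm_zero] at this
    exact norm_eq_zero.mp this.symm
  -- A has closed range
  have hALnorm : ∀ x, ‖A_L x‖ = ‖x‖ := by intro x; rw [hAL]; exact hAnorm x
  have hclosed : IsClosed ((LinearMap.range (A_L : H₀ →ₗ[ℂ] H₀) : Submodule ℂ H₀) : Set H₀) := by
    have hiso : Isometry A_L := AddMonoidHomClass.isometry_of_norm A_L hALnorm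
    have : ((LinearMap.range (A_L : H₀ →ₗ[ℂ] H₀) : Submodule ℂ H₀) : Set H₀) = Set.range A_L := by
      ext z; simp [LinearMap.mem_range]
    rw [this]
    exact hiso.isClosedEmbedding.isClosed_range
  -- A's range contains all kernels
  have hcontains : ∀ w ∈ Ω, LinearMap.ker ((T₀ - w • (1 : H₀ →L[ℂ] H₀) : H₀ →L[ℂ] H₀) : H₀ →ₗ[ℂ] H₀)
      ≤ LinearMap.range (A_L : H₀ →ₗ[ℂ] H₀) := by
    intro w hw x hx
    obtain ⟨γ₀, hγker, hγne, hspan⟩ := CDaux.ker_spanning (h₀dim w hw)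
    have hAker : A_L γ₀ ∈ LinearMap.ker ((T₀ - w • (1 : H₀ →L[ℂ] H₀) : H₀ →L[ℂ] H₀) : H₀ →ₗ[ℂ] H₀) := by
      rw [LinearMap.mem_ker, ContinuousLinearMap.coe_coe] at hγker ⊢
      simp only [ContinuousLinearMap.sub_apply, ContinuousLinearMap.smul_apply,
        ContinuousLinearMap.one_apply] at hγker ⊢
      rw [hAcommT, ← map_smul, ← map_sub, hγker, map_zero]
    have hAγne : A_L γ₀ ≠ 0 := by
      rw [hAL]
      intro h
      exact hγne (hAinj γ₀ h)
    obtain ⟨c, hc⟩ := CDaux.ker_span_of_ne (h₀dim w hw) hAker hAγne x hx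
    exact ⟨c • γ₀, by rw [ContinuousLinearMap.coe_coe, map_smul, ← hc]⟩
  have hAsurj : Function.Surjective A_L :=
    CDaux.surj_of_range_closed_contains Ω T₀ h₀dense A_L hclosed hcontains
  -- V is zero
  have hV0 : ∀ y, V y = 0 := by
    intro y
    have hall : ∀ x, ⟪A x, V y⟫_ℂ = 0 := by
      intro x
      have h := huinner (mk x 0) (mk 0 y)
      rw [hu₀, hu₁, hinner, hinner] at h
      rw [hW0] at h
      simpa using h
    obtain ⟨x, hx⟩ := hAsurj (V y)
    have := hall x
    rw [hAL] at hx
    rw [hx] at this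
    exact inner_self_eq_zero.mp this
  -- D is an isometric bijection
  have hDnorm : ∀ y, ‖Dd y‖ = ‖y‖ := by
    intro y
    have h := huinner (mk 0 y) (mk 0 y)
    rw [hu₁, hinner, hinner] at h
    rw [hV0] at h
    simp only [inner_zero_left, zero_add, inner_zero_right] at h
    rw [inner_self_eq_norm_sq_to_K, inner_self_eq_norm_sq_to_K] at h
    have h2 : (‖Dd y‖ : ℝ) ^ 2 = ‖y‖ ^ 2 := by exact_mod_cast h
    nlinarith [norm_nonneg (Dd y), norm_nonneg y]
  have hDsurj : ∀ z, ∃ y, Dd y = z := by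
    intro z
    refine ⟨(e (u.symm (mk 0 z))).2, ?_⟩
    have hsy : u (mk ((e (u.symm (mk 0 z))).1) ((e (u.symm (mk 0 z))).2)) = mk 0 z := by
      rw [← hmk_decomp]
      exact u.apply_symm_apply _
    rw [hublock] at hsy
    have h2 := hmk_inj hsy
    rcases h2 with ⟨-, h3⟩
    rw [hW0, zero_add] at h3
    exact h3
  -- final norm identity
  have heq2 : ∀ y, A_L ((μ:ℂ) • S y) = (μ':ℂ) • S (Dd y) := by
    intro y
    have h := (hEq1 y).1
    simp only [hV0, map_zero, add_zero, zero_add] at h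
    rw [hAL]
    exact h
  have hnorm_eq : ∀ y, μ * ‖S y‖ = μ' * ‖S (Dd y)‖ := by
    intro y
    have h := congrArg norm (heq2 y)
    rw [map_smul, norm_smul, norm_smul] at h
    simpa [Complex.norm_real, abs_of_pos hμ, abs_of_pos hμ', hALnorm] using h
  have hSpos : 0 < ‖S‖ := by
    rcases (norm_nonneg S).lt_or_eq with h | h
    · exact h
    · exact absurd ((opNorm_zero_iff S).mp h.symm) hS
  have hle1 : μ * ‖S‖ ≤ μ' * ‖S‖ := by
    have hb : ‖S‖ ≤ μ' / μ * ‖S‖ := by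
      apply ContinuousLinearMap.opNorm_le_bound _ (by positivity)
      intro y
      have h := hnorm_eq y
      have h2 : ‖S y‖ = μ' / μ * ‖S (Dd y)‖ := by
        field_simp
        linarith [h]
      rw [h2]
      have h3 : ‖S (Dd y)‖ ≤ ‖S‖ * ‖Dd y‖ := S.le_opNorm _
      rw [hDnorm] at h3
      calc μ' / μ * ‖S (Dd y)‖ ≤ μ' / μ * (‖S‖ * ‖y‖) := by
            apply mul_le_mul_of_nonneg_left h3 (by positivity)
        _ = μ' / μ * ‖S‖ * ‖y‖ := by ring
    rw [div_mul_eq_mul_div, le_div_iff₀ hμ] at hb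
    linarith
  have hle2 : μ' * ‖S‖ ≤ μ * ‖S‖ := by
    have hb : ‖S‖ ≤ μ / μ' * ‖S‖ := by
      apply ContinuousLinearMap.opNorm_le_bound _ (by positivity)
      intro z
      obtain ⟨y, hy⟩ := hDsurj z
      have h := hnorm_eq y
      rw [hy] at h
      have h2 : ‖S z‖ = μ / μ' * ‖S y‖ := by
        field_simp
        linarith [h]
      rw [h2]
      have h3 : ‖S y‖ ≤ ‖S‖ * ‖y‖ := S.le_opNorm _
      have h4 : ‖y‖ = ‖z‖ := by rw [← hy, hDnorm]
      rw [h4] at h3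
      calc μ / μ' * ‖S y‖ ≤ μ / μ' * (‖S‖ * ‖z‖) := by
            apply mul_le_mul_of_nonneg_left h3 (by positivity)
        _ = μ / μ' * ‖S‖ * ‖z‖ := by ring
    rw [div_mul_eq_mul_div, le_div_iff₀ hμ'] at hb
    linarith
  have : μ * ‖S‖ = μ' * ‖S‖ := le_antisymm hle1 hle2
  exact mul_right_cancel₀ (ne_of_gt hSpos) this
end
end

section
/- Let Ω be a connected open subset of ℂ, let T be an operator in B_1(Ω) on a complex separable Hilbert space H, and let X be a bounded operator on H that is quasinilpotent and satisfies TX = XT. Then X = 0. -/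
noncomputable section

open ContinuousLinearMap
open scoped InnerProductSpace

/-- Quasinilpotent operators have spectral radius zero. -/
lemma specRad_zero {H : Type*} [NormedAddCommGroup H] [InnerProductSpace ℂ H] [CompleteSpace H]
    (X : H →L[ℂ] H)
    (hquasi : Filter.Tendsto (fun k : ℕ => ‖X ^ k‖ ^ ((k : ℝ)⁻¹))
      Filter.atTop (nhds 0)) :
    spectralRadius ℂ X = 0 := by
  have h1 := spectrum.pow_norm_pow_one_div_tendsto_nhds_spectralRadius X
  have h2 : Filter.Tendsto (fun n : ℕ => ENNReal.ofReal (‖X ^ n‖ ^ (1 / n : ℝ)))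
      Filter.atTop (nhds 0) := by
    rw [← ENNReal.ofReal_zero]
    apply (ENNReal.continuous_ofReal.tendsto 0).comp
    simpa [one_div] using hquasi
  exact tendsto_nhds_unique h1 h2

/-- An eigenvalue belongs to the spectrum. -/
lemma eig_mem_spectrum {H : Type*} [NormedAddCommGroup H] [InnerProductSpace ℂ H]
    (X : H →L[ℂ] H) (c : ℂ) (v : H) (hv : v ≠ 0) (hXv : X v = c • v) :
    c ∈ spectrum ℂ X := by
  rw [spectrum.mem_iff]
  intro h
  apply hv
  have key : (algebraMap ℂ (H →L[ℂ] H) c - X) v = 0 := by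
    simp [Algebra.algebraMap_eq_smul_one, hXv, sub_apply, smul_apply, one_apply]
  have key' : (h.unit : H →L[ℂ] H) v = 0 := by rw [IsUnit.unit_spec]; exact key
  have h2 := congrArg (fun Y : H →L[ℂ] H => Y v) h.unit.inv_mul
  simp only [ContinuousLinearMap.mul_apply, ContinuousLinearMap.one_apply] at h2
  rw [key', map_zero] at h2
  exact h2.symm

/-- If `T ∈ B₁(Ω)` and `X` is quasinilpotent with `TX = XT`, then `X = 0`. -/
theorem statement10
    {H : Type*} [NormedAddCommGroup H] [InnerProductSpace ℂ H] [CompleteSpace H]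
    [TopologicalSpace.SeparableSpace H]
    (Ω : Set ℂ) (hΩopen : IsOpen Ω) (hΩconn : IsConnected Ω)
    (T : H →L[ℂ] H) (hT : CowenDouglas 1 Ω T)
    (X : H →L[ℂ] H)
    (hquasi : Filter.Tendsto (fun k : ℕ => ‖X ^ k‖ ^ ((k : ℝ)⁻¹))
      Filter.atTop (nhds 0))
    (hcomm : T * X = X * T) :
    X = 0 := by
  obtain ⟨-, -, hdense, hrank⟩ := hT
  have hrad : spectralRadius ℂ X = 0 := specRad_zero X hquasi
  -- X vanishes on each kernel
  have hker : ∀ w ∈ Ω, LinearMap.ker ((T - w • (1 : H →L[ℂ] H) : H →L[ℂ] H) : H →ₗ[ℂ] H) ≤ LinearMap.ker (X : H →ₗ[ℂ] H) := by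
    intro w hw v hv
    simp only [LinearMap.mem_ker, ContinuousLinearMap.coe_coe] at hv ⊢
    by_cases hv0 : v = 0
    · simp [hv0]
    -- X maps the kernel to itself
    have hXv : X v ∈ LinearMap.ker ((T - w • (1 : H →L[ℂ] H) : H →L[ℂ] H) : H →ₗ[ℂ] H) := by
      simp only [LinearMap.mem_ker, ContinuousLinearMap.coe_coe, sub_apply, smul_apply,
        ContinuousLinearMap.one_apply] at hv ⊢
      have hTX : T (X v) = X (T v) := by
        have h3 := congrArg (fun Y : H →L[ℂ] H => Y v) hcomm
        simp only [ContinuousLinearMap.mul_apply] at h3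
        exact h3
      rw [hTX, ← map_smul, ← map_sub, hv, map_zero]
    -- the kernel is one-dimensional, so X v = c • v
    have h1 := hrank w hw
    rw [finrank_eq_one_iff'] at h1
    obtain ⟨u, hu0, hu⟩ := h1
    obtain ⟨a, ha⟩ := hu ⟨v, hv⟩
    obtain ⟨b, hb⟩ := hu ⟨X v, hXv⟩
    have ha0 : a ≠ 0 := by
      rintro rfl
      apply hv0
      exact (congrArg (Subtype.val) ha.symm).trans (zero_smul ℂ (u : H))
    have hval : X v = (b * a⁻¹) • v := by
      have hv' : (v : H) = a • (u : H) := by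
        exact congrArg (Subtype.val) ha.symm
      have hXv' : X v = b • (u : H) := by
        exact congrArg (Subtype.val) hb.symm
      rw [hXv', hv', smul_smul, mul_assoc, inv_mul_cancel₀ ha0, mul_one]
    -- eigenvalue of X must be 0
    have hc : b * a⁻¹ ∈ spectrum ℂ X := eig_mem_spectrum X _ v hv0 hval
    have hle : (‖b * a⁻¹‖₊ : ENNReal) ≤ spectralRadius ℂ X :=
      le_iSup₂ (f := fun k (_ : k ∈ spectrum ℂ X) => (‖k‖₊ : ENNReal)) (b * a⁻¹) hc
    rw [hrad, nonpos_iff_eq_zero] at hle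
    have : b * a⁻¹ = 0 := by simpa using hle
    rw [hval, this, zero_smul]
  -- X vanishes on a dense subspace, hence X = 0
  have hsup : (⨆ w ∈ Ω, LinearMap.ker ((T - w • (1 : H →L[ℂ] H) : H →L[ℂ] H) : H →ₗ[ℂ] H)) ≤ LinearMap.ker (X : H →ₗ[ℂ] H) :=
    iSup₂_le hker
  have hclosed : IsClosed (LinearMap.ker (X : H →ₗ[ℂ] H) : Set H) := ContinuousLinearMap.isClosed_ker X
  have htop : (⊤ : Submodule ℂ H) ≤ LinearMap.ker (X : H →ₗ[ℂ] H) := by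
    rw [← hdense]
    exact Submodule.topologicalClosure_minimal _ hsup hclosed
  ext v
  simpa using htop (Submodule.mem_top : v ∈ (⊤ : Submodule ℂ H))
end
end

section
/- Let Ω be a connected open subset of ℂ. Then every operator T in 𝓕B_2(Ω) is irreducible; that is, the only orthogonal projections commuting with T are 0 and the identity. -/
noncomputable section

open ContinuousLinearMap
open scoped InnerProductSpace

namespace S11Aux

set_option linter.unusedSectionVars false
variable {H : Type*} [NormedAddCommGroup H] [InnerProductSpace ℂ H] [CompleteSpace H]

/-- The commutator derivation `a ↦ T*a - a*T`. -/
def dl (T a : H →L[ℂ] H) : H →L[ℂ] H := T * a - a * T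

lemma dl_mul (T a b : H →L[ℂ] H) : dl T (a * b) = dl T a * b + a * dl T b := by
  unfold dl; noncomm_ring

lemma dl_add (T a b : H →L[ℂ] H) : dl T (a + b) = dl T a + dl T b := by
  unfold dl; noncomm_ring

lemma dl_nsmul (T : H →L[ℂ] H) (n : ℕ) (a : H →L[ℂ] H) :
    dl T (n • a) = n • dl T a := by
  unfold dl; rw [mul_smul_comm, smul_mul_assoc, smul_sub]

lemma dl_norm (T a : H →L[ℂ] H) : ‖dl T a‖ ≤ (2 * ‖T‖) * ‖a‖ := by
  unfold dl
  calc ‖T * a - a * T‖ ≤ ‖T * a‖ + ‖a * T‖ := norm_sub_le _ _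
    _ ≤ ‖T‖ * ‖a‖ + ‖a‖ * ‖T‖ := add_le_add (norm_mul_le _ _) (norm_mul_le _ _)
    _ = (2 * ‖T‖) * ‖a‖ := by ring

lemma dl_iter_norm (T : H →L[ℂ] H) (n : ℕ) (a : H →L[ℂ] H) :
    ‖(dl T)^[n] a‖ ≤ (2 * ‖T‖) ^ n * ‖a‖ := by
  induction n with
  | zero => simp
  | succ n ih =>
    rw [Function.iterate_succ_apply']
    calc ‖dl T ((dl T)^[n] a)‖ ≤ (2 * ‖T‖) * ‖(dl T)^[n] a‖ := dl_norm _ _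
      _ ≤ (2 * ‖T‖) * ((2 * ‖T‖) ^ n * ‖a‖) := by
          apply mul_le_mul_of_nonneg_left ih (by positivity)
      _ = (2 * ‖T‖) ^ (n + 1) * ‖a‖ := by ring

lemma dl_pow_zero (T x : H →L[ℂ] H) (hx : dl T x = 0) (n : ℕ) : dl T (x ^ n) = 0 := by
  induction n with
  | zero => unfold dl; simp
  | succ n ih => rw [pow_succ, dl_mul, ih, hx]; simp

lemma dl_leibniz (T a : H →L[ℂ] H) (ha : dl T (dl T a) = 0) (b : H →L[ℂ] H) (n : ℕ) :
    (dl T)^[n + 1] (a * b) = a * (dl T)^[n + 1] b + (n + 1) • (dl T a * (dl T)^[n] b) := by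
  induction n generalizing b with
  | zero => simp [dl_mul, add_comm]
  | succ n ih =>
    rw [Function.iterate_succ_apply' (dl T) (n+1) (a*b), ih, dl_add, dl_mul, dl_nsmul, dl_mul,
      ha, Function.iterate_succ_apply' (dl T) (n+1) b,
      Function.iterate_succ_apply' (dl T) n b]
    simp only [zero_mul, zero_add, succ_nsmul]
    abel

lemma kleinecke (T d : H →L[ℂ] H) (h : dl T (dl T d) = 0) (n : ℕ) :
    (dl T)^[n] (d ^ n) = (Nat.factorial n) • (dl T d) ^ n := by
  induction n with
  | zero => simp
  | succ n ih =>
    have h1 : d ^ (n + 1) = d * d ^ n := by rw [pow_succ']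
    rw [h1, dl_leibniz T d h (d ^ n) n, Function.iterate_succ_apply' (dl T) n (d ^ n), ih,
      dl_nsmul, dl_pow_zero T (dl T d) h n]
    simp only [mul_zero, smul_zero, zero_add, mul_smul_comm, smul_smul, Nat.factorial_succ,
      ← pow_succ']



lemma norm_pow_le'' (M : H →L[ℂ] H) (n : ℕ) : ‖M ^ n‖ ≤ ‖M‖ ^ n := by
  induction n with
  | zero => rw [pow_zero, pow_zero]; exact norm_id_le
  | succ n ih =>
    rw [pow_succ, pow_succ]
    calc ‖M ^ n * M‖ ≤ ‖M ^ n‖ * ‖M‖ := norm_mul_le _ _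
      _ ≤ ‖M‖ ^ n * ‖M‖ := mul_le_mul_of_nonneg_right ih (norm_nonneg _)

lemma comm_vanish (T M : H →L[ℂ] H) (hc : (dl T M) * T = T * (dl T M))
    (w : ℂ) (hfin : Module.finrank ℂ (LinearMap.ker ((T - w • (1 : H →L[ℂ] H) : H →L[ℂ] H) : H →ₗ[ℂ] H)) = 1) :
    ∀ v ∈ LinearMap.ker ((T - w • (1 : H →L[ℂ] H) : H →L[ℂ] H) : H →ₗ[ℂ] H), dl T M v = 0 := by
  set X : H →L[ℂ] H := dl T M with hX
  set K := LinearMap.ker ((T - w • (1 : H →L[ℂ] H) : H →L[ℂ] H) : H →ₗ[ℂ] H) with hK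
  have hcomm' : (T - w • (1 : H →L[ℂ] H)) * X = X * (T - w • (1 : H →L[ℂ] H)) := by
    rw [sub_mul, mul_sub, hc, smul_mul_assoc, mul_smul_comm, one_mul, mul_one]
  have hXK : ∀ v ∈ K, X v ∈ K := by
    intro v hv
    have hv' : (T - w • (1 : H →L[ℂ] H)) v = 0 := hv
    have h2 : (T - w • (1 : H →L[ℂ] H)) (X v) = X ((T - w • (1 : H →L[ℂ] H)) v) := by
      have := congrArg (fun (F : H →L[ℂ] H) => F v) hcomm'
      simpa using this
    have : (T - w • (1 : H →L[ℂ] H)) (X v) = 0 := by rw [h2, hv', map_zero]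
    exact this
  obtain ⟨u, hu0, hspan⟩ := finrank_eq_one_iff'.mp hfin
  have huc : (u : H) ≠ 0 := fun h => hu0 (Subtype.ext h)
  obtain ⟨φ, hφ⟩ := hspan ⟨X u, hXK u u.2⟩
  have hXu : X (u : H) = φ • (u : H) := by
    have := congrArg (Subtype.val) hφ
    simpa using this.symm
  have hXn : ∀ n : ℕ, (X ^ n) (u : H) = φ ^ n • (u : H) := by
    intro n
    induction n with
    | zero => simp
    | succ n ih =>
      rw [pow_succ', pow_succ']
      have h3 : (X * X ^ n) (u : H) = X ((X ^ n) (u : H)) := rfl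
      rw [h3, ih, map_smul, hXu, smul_smul, mul_comm]
  have hdd : dl T (dl T M) = 0 := by
    rw [← hX]; rw [dl, sub_eq_zero]; exact hc.symm
  have key : ∀ n : ℕ, (Nat.factorial n : ℝ) * ‖φ‖ ^ n ≤ (2 * ‖T‖ * ‖M‖) ^ n := by
    intro n
    have h1 : ((dl T)^[n] (M ^ n)) (u : H) = ((Nat.factorial n : ℂ) * φ ^ n) • (u : H) := by
      rw [kleinecke T M hdd n]
      have h4 : ((Nat.factorial n) • X ^ n) (u : H) = (Nat.factorial n) • ((X ^ n) (u : H)) := rfl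
      rw [h4, hXn n, ← Nat.cast_smul_eq_nsmul ℂ, smul_smul]
    have h2 : (Nat.factorial n : ℝ) * ‖φ‖ ^ n * ‖(u : H)‖ =
        ‖((dl T)^[n] (M ^ n)) (u : H)‖ := by
      rw [h1, norm_smul, norm_mul, norm_pow]
      simp [Complex.norm_natCast]
    have h3 : ‖((dl T)^[n] (M ^ n)) (u : H)‖ ≤ (2 * ‖T‖ * ‖M‖) ^ n * ‖(u : H)‖ := by
      calc ‖((dl T)^[n] (M ^ n)) (u : H)‖ ≤ ‖(dl T)^[n] (M ^ n)‖ * ‖(u : H)‖ :=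
            le_opNorm _ _
        _ ≤ ((2 * ‖T‖) ^ n * ‖M ^ n‖) * ‖(u : H)‖ := by
            apply mul_le_mul_of_nonneg_right (dl_iter_norm T n (M ^ n)) (norm_nonneg _)
        _ ≤ ((2 * ‖T‖) ^ n * ‖M‖ ^ n) * ‖(u : H)‖ := by
            have := norm_pow_le'' M n
            gcongr
        _ = (2 * ‖T‖ * ‖M‖) ^ n * ‖(u : H)‖ := by ring
    have hu : 0 < ‖(u : H)‖ := norm_pos_iff.mpr huc
    have := h2.le.trans h3
    exact le_of_mul_le_mul_right (by linarith) hu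
  have hφ0 : φ = 0 := by
    by_contra hne
    have hpos : 0 < ‖φ‖ := norm_pos_iff.mpr hne
    set C : ℝ := 2 * ‖T‖ * ‖M‖ with hC
    have h1 : ∀ n : ℕ, 1 ≤ (C / ‖φ‖) ^ n / (Nat.factorial n) := by
      intro n
      have hfac : (0:ℝ) < (Nat.factorial n : ℝ) := by positivity
      rw [le_div_iff₀ hfac, one_mul, div_pow, le_div_iff₀ (by positivity : (0:ℝ) < ‖φ‖ ^ n)]
      exact key n
    have h2 := FloorSemiring.tendsto_pow_div_factorial_atTop (C / ‖φ‖)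
    have h3 := h2.eventually_lt_const (by norm_num : (0:ℝ) < 1)
    obtain ⟨n, hn⟩ := h3.exists
    exact absurd (h1 n) (not_le.mpr hn)
  intro v hv
  obtain ⟨c, hcv⟩ := hspan ⟨v, hv⟩
  have hv' : v = c • (u : H) := by
    have := congrArg (Subtype.val) hcv
    simpa using this.symm
  rw [hv', map_smul, hXu, hφ0, zero_smul, smul_zero]

lemma op_eq_zero_of_vanish {H' : Type*} [NormedAddCommGroup H'] [NormedSpace ℂ H']
    (T : H →L[ℂ] H) {Ω : Set ℂ}
    (hdense : (⨆ w ∈ Ω, LinearMap.ker ((T - w • (1 : H →L[ℂ] H) : H →L[ℂ] H) : H →ₗ[ℂ] H)).topologicalClosure = ⊤)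
    (X : H →L[ℂ] H')
    (hX : ∀ w ∈ Ω, ∀ v ∈ LinearMap.ker ((T - w • (1 : H →L[ℂ] H) : H →L[ℂ] H) : H →ₗ[ℂ] H), X v = 0) :
    X = 0 := by
  have h1 : (⨆ w ∈ Ω, LinearMap.ker ((T - w • (1 : H →L[ℂ] H) : H →L[ℂ] H) : H →ₗ[ℂ] H)) ≤ LinearMap.ker (X : H →ₗ[ℂ] H') := by
    refine iSup_le fun w => iSup_le fun hw v hv => ?_
    exact hX w hw v hv
  have h2 := Submodule.topologicalClosure_minimal _ h1 (ContinuousLinearMap.isClosed_ker X)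
  rw [hdense] at h2
  ext v
  have : v ∈ LinearMap.ker (X : H →ₗ[ℂ] H') := h2 (Submodule.mem_top)
  simpa using this


lemma exists_right_inverse (T' : H →L[ℂ] H) (hsurj : Function.Surjective T') :
    ∃ R : H →L[ℂ] H, T' * R = 1 := by
  set K := LinearMap.ker (T' : H →ₗ[ℂ] H) with hK
  haveI : CompleteSpace K := (ContinuousLinearMap.isClosed_ker T').completeSpace_coe
  set φ : (↥Kᗮ) →L[ℂ] H := T'.comp (Submodule.subtypeL Kᗮ) with hφ
  have hinj : LinearMap.ker (φ : ↥Kᗮ →ₗ[ℂ] H) = ⊥ := by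
    rw [LinearMap.ker_eq_bot']
    intro x hx
    have hxK : (x : H) ∈ K := by
      exact hx
    have h0 : ⟪(x : H), (x : H)⟫_ℂ = 0 :=
      (Submodule.mem_orthogonal K (x : H)).mp x.2 (x : H) hxK
    have : (x : H) = 0 := inner_self_eq_zero.mp h0
    exact Subtype.ext this
  have hsurj' : LinearMap.range (φ : ↥Kᗮ →ₗ[ℂ] H) = ⊤ := by
    rw [LinearMap.range_eq_top]
    intro y
    obtain ⟨x, hx⟩ := hsurj y
    have hp : x - (K.orthogonalProjectionOnto x : H) ∈ Kᗮ :=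
      K.sub_starProjection_mem_orthogonal x
    refine ⟨⟨x - (K.orthogonalProjectionOnto x : H), hp⟩, ?_⟩
    have h2 : T' ((K.orthogonalProjectionOnto x : H)) = 0 := (K.orthogonalProjectionOnto x).2
    simp only [hφ, ContinuousLinearMap.coe_coe, ContinuousLinearMap.comp_apply, Submodule.subtypeL_apply, map_sub, h2,
      sub_zero]
    exact hx
  set equiv := ContinuousLinearEquiv.ofBijective φ hinj hsurj' with he
  refine ⟨(Submodule.subtypeL Kᗮ).comp (equiv.symm : H →L[ℂ] ↥Kᗮ), ?_⟩
  ext y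
  have h3 : T' ((Submodule.subtypeL Kᗮ) (equiv.symm y)) = φ (equiv.symm y) := rfl
  simp only [ContinuousLinearMap.mul_apply, ContinuousLinearMap.comp_apply,
    ContinuousLinearMap.one_apply, ContinuousLinearEquiv.coe_coe]
  rw [h3, he, ContinuousLinearEquiv.ofBijective_apply_symm_apply]

/-- If a complex differentiable function is real-valued near a point, its derivative vanishes. -/
lemma deriv_zero_of_real {f : ℂ → ℂ} {z : ℂ} {L : ℂ} (hf : HasDerivAt f L z)
    (hre : ∀ᶠ w in nhds z, (f w).im = 0) : L = 0 := by
  have key : ∀ v : ℂ, (v * L).im = 0 := by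
    intro v
    set p : ℝ → ℂ := fun t => z + t • v with hp
    have hpd : HasDerivAt p v 0 := by
      show HasDerivAt (fun t : ℝ => z + t • v) v 0
      simpa using ((hasDerivAt_id (0:ℝ)).smul_const v).const_add z
    have hp0 : p 0 = z := by simp [hp]
    have hfF : HasFDerivAt f (((1 : ℂ →L[ℂ] ℂ).smulRight L).restrictScalars ℝ) (p 0) := by
      rw [hp0]; exact (hf.hasFDerivAt).restrictScalars ℝ
    have hcomp : HasDerivAt (fun t => f (p t)) (v • L) 0 := by
      have := hfF.comp_hasDerivAt (x := (0:ℝ)) hpd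
      exact this
    have hIm : HasDerivAt (fun t => (f (p t)).im) ((v • L).im) 0 := by
      have h2 := (Complex.imCLM.hasFDerivAt (x := f (p 0))).comp_hasDerivAt (x := (0:ℝ)) hcomp
      exact h2
    have hzero : HasDerivAt (fun t => (f (p t)).im) 0 0 := by
      have hev : (fun t => (f (p t)).im) =ᶠ[nhds (0:ℝ)] (fun _ => (0:ℝ)) := by
        have hcont : ContinuousAt p 0 := hpd.continuousAt
        have : ∀ᶠ t in nhds (0:ℝ), (f (p t)).im = 0 := by
          have := hcont.tendsto
          rw [hp0] at this
          exact this.eventually hre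
        exact this
      exact (hasDerivAt_const (0:ℝ) (0:ℝ)).congr_of_eventuallyEq hev
    have := hIm.unique hzero
    simpa [smul_eq_mul] using this
  have h1 : L.im = 0 := by simpa using key 1
  have h2 : L.re = 0 := by
    have := key Complex.I
    simpa [Complex.mul_im] using this
  exact Complex.ext h2 h1


set_option maxHeartbeats 2000000 in
lemma scalar_of_sa_comm {Ω : Set ℂ} (hΩo : IsOpen Ω) (hΩc : IsConnected Ω)
    (T M : H →L[ℂ] H)
    (hsurj : ∀ w ∈ Ω, Function.Surjective ((T - w • (1 : H →L[ℂ] H)) : H → H))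
    (hfin : ∀ w ∈ Ω, Module.finrank ℂ (LinearMap.ker ((T - w • (1 : H →L[ℂ] H) : H →L[ℂ] H) : H →ₗ[ℂ] H)) = 1)
    (hdense : (⨆ w ∈ Ω, LinearMap.ker ((T - w • (1 : H →L[ℂ] H) : H →L[ℂ] H) : H →ₗ[ℂ] H)).topologicalClosure = ⊤)
    (hsa : ∀ x y : H, ⟪M x, y⟫_ℂ = ⟪x, M y⟫_ℂ)
    (hcomm : M * T = T * M) :
    ∃ a : ℂ, M = a • (1 : H →L[ℂ] H) := by
  classical
  -- M preserves each kernel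
  have hMK : ∀ (w : ℂ), ∀ v ∈ LinearMap.ker ((T - w • (1 : H →L[ℂ] H) : H →L[ℂ] H) : H →ₗ[ℂ] H),
      M v ∈ LinearMap.ker ((T - w • (1 : H →L[ℂ] H) : H →L[ℂ] H) : H →ₗ[ℂ] H) := by
    intro w v hv
    have hv' : (T - w • (1 : H →L[ℂ] H)) v = 0 := hv
    have hc : (T - w • (1 : H →L[ℂ] H)) * M = M * (T - w • (1 : H →L[ℂ] H)) := by
      rw [sub_mul, mul_sub, hcomm, smul_mul_assoc, mul_smul_comm, one_mul, mul_one]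
    have h2 : (T - w • (1 : H →L[ℂ] H)) (M v) = M ((T - w • (1 : H →L[ℂ] H)) v) := by
      have := congrArg (fun (F : H →L[ℂ] H) => F v) hc
      simpa using this
    have : (T - w • (1 : H →L[ℂ] H)) (M v) = 0 := by rw [h2, hv', map_zero]
    exact this
  have hev : ∀ w ∈ Ω, ∃ c : ℂ, ∀ v ∈ LinearMap.ker ((T - w • (1 : H →L[ℂ] H) : H →L[ℂ] H) : H →ₗ[ℂ] H),
      M v = c • v := by
    intro w hw
    obtain ⟨u, hu0, hspan⟩ := finrank_eq_one_iff'.mp (hfin w hw)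
    obtain ⟨c, hc⟩ := hspan ⟨M u, hMK w u u.2⟩
    have hMu : M (u : H) = c • (u : H) := by
      have := congrArg (Subtype.val) hc
      exact this.symm
    refine ⟨c, fun v hv => ?_⟩
    obtain ⟨t, ht⟩ := hspan ⟨v, hv⟩
    have hv' : v = t • (u : H) := by
      have := congrArg (Subtype.val) ht
      exact this.symm
    rw [hv', map_smul, hMu, smul_smul, smul_smul, mul_comm]
  set m : ℂ → ℂ := fun w => if h : w ∈ Ω then (hev w h).choose else 0 with hmdef
  have hm : ∀ w (hw : w ∈ Ω), ∀ v ∈ LinearMap.ker ((T - w • (1 : H →L[ℂ] H) : H →L[ℂ] H) : H →ₗ[ℂ] H),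
      M v = m w • v := by
    intro w hw
    rw [hmdef]
    simp only [dif_pos hw]
    exact (hev w hw).choose_spec
  have hker : ∀ w ∈ Ω, ∃ u : H, u ≠ 0 ∧ u ∈ LinearMap.ker ((T - w • (1 : H →L[ℂ] H) : H →L[ℂ] H) : H →ₗ[ℂ] H) := by
    intro w hw
    obtain ⟨u, hu0, -⟩ := finrank_eq_one_iff'.mp (hfin w hw)
    exact ⟨u, fun h => hu0 (Subtype.ext h), u.2⟩
  have hre : ∀ w ∈ Ω, (m w).im = 0 := by
    intro w hw
    obtain ⟨u, hu0, hu⟩ := hker w hw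
    have h1 : ⟪u, M u⟫_ℂ = m w * ⟪u, u⟫_ℂ := by
      rw [hm w hw u hu, inner_smul_right]
    have h2 : (starRingEnd ℂ) ⟪u, M u⟫_ℂ = ⟪u, M u⟫_ℂ := by
      calc (starRingEnd ℂ) ⟪u, M u⟫_ℂ = ⟪M u, u⟫_ℂ := inner_conj_symm (M u) u
        _ = ⟪u, M u⟫_ℂ := hsa u u
    rw [h1, map_mul, inner_conj_symm] at h2
    have h3 : ⟪u, u⟫_ℂ ≠ 0 := fun h => hu0 (inner_self_eq_zero.mp h)
    have h4 : (starRingEnd ℂ) (m w) = m w := mul_right_cancel₀ h3 h2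
    exact Complex.conj_eq_iff_im.mp h4
  -- local constancy
  have hloc : ∀ w₀ ∈ Ω, ∃ ε > 0, Metric.ball w₀ ε ⊆ Ω ∧
      ∀ w ∈ Metric.ball w₀ ε, m w = m w₀ := by
    intro w₀ hw₀
    obtain ⟨R, hR⟩ := exists_right_inverse (T - w₀ • (1 : H →L[ℂ] H)) (hsurj w₀ hw₀)
    obtain ⟨u₀, hu₀0, hu₀⟩ := hker w₀ hw₀
    set T' := T - w₀ • (1 : H →L[ℂ] H) with hT'
    set F : ℂ → (H →L[ℂ] H) := fun w => (1 : H →L[ℂ] H) - (w - w₀) • R with hF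
    set ε₀ : ℝ := 1 / (‖R‖ + 1) with hε₀
    have hε₀pos : 0 < ε₀ := by positivity
    have hunit : ∀ w ∈ Metric.ball w₀ ε₀, IsUnit (F w) := by
      intro w hw
      apply isUnit_one_sub_of_norm_lt_one
      rw [norm_smul]
      have h1 : ‖w - w₀‖ < ε₀ := by
        rw [← dist_eq_norm]; exact hw
      calc ‖w - w₀‖ * ‖R‖ < ε₀ * (‖R‖ + 1) := by
            nlinarith [norm_nonneg R, norm_nonneg (w - w₀), hε₀pos]
        _ = 1 := by rw [hε₀]; field_simp
    set γ : ℂ → H := fun w => Ring.inverse (F w) u₀ with hγ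
    have hγker : ∀ w ∈ Metric.ball w₀ ε₀, γ w ∈ LinearMap.ker ((T - w • (1 : H →L[ℂ] H) : H →L[ℂ] H) : H →ₗ[ℂ] H) := by
      intro w hw
      set z : ℂ := w - w₀ with hz
      set G := Ring.inverse (F w) with hG
      have h1 : F w * G = 1 := Ring.mul_inverse_cancel (F w) (hunit w hw)
      have hGid : G = 1 + z • (R * G) := by
        have h2 : G - z • (R * G) = 1 := by
          calc G - z • (R * G) = (1 - z • R) * G := by
                rw [sub_mul, one_mul, smul_mul_assoc]
            _ = 1 := h1
        exact eq_add_of_sub_eq h2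
      have h3 : T' * G = T' + z • G := by
        calc T' * G = T' * (1 + z • (R * G)) := by rw [← hGid]
          _ = T' + z • (T' * R * G) := by
              rw [mul_add, mul_one, mul_smul_comm, mul_assoc]
          _ = T' + z • G := by rw [hR, one_mul]
      have h4 : T - w • (1 : H →L[ℂ] H) = T' - z • (1 : H →L[ℂ] H) := by
        rw [hT', hz, sub_smul, sub_sub]
        congr 1
        abel
      have h5 : (T - w • (1 : H →L[ℂ] H)) * G = T' := by
        rw [h4, sub_mul, h3, smul_mul_assoc, one_mul]
        abel
      have h6 : (T - w • (1 : H →L[ℂ] H)) (γ w) = T' u₀ := by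
        have := congrArg (fun (X : H →L[ℂ] H) => X u₀) h5
        simpa [hγ, hG] using this
      have h7 : T' u₀ = 0 := hu₀
      rw [LinearMap.mem_ker]
      exact h6.trans h7
    -- differentiability of numerator and denominator
    have hFdiff : ∀ w : ℂ, DifferentiableAt ℂ F w := by
      intro w
      apply (differentiableAt_const (1 : H →L[ℂ] H)).sub
      exact (differentiableAt_id.sub_const w₀).smul_const R
    have hγdiff : ∀ w ∈ Metric.ball w₀ ε₀, DifferentiableAt ℂ γ w := by
      intro w hw
      have h1 : DifferentiableAt ℂ (fun w => Ring.inverse (F w)) w :=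
        (differentiableAt_inverse (hunit w hw)).comp w (hFdiff w)
      exact ((ContinuousLinearMap.apply ℂ H u₀).differentiableAt).comp w h1
    set num : ℂ → ℂ := fun w => innerSL ℂ u₀ (M (γ w)) with hnum
    set den : ℂ → ℂ := fun w => innerSL ℂ u₀ (γ w) with hden
    have hnumdiff : ∀ w ∈ Metric.ball w₀ ε₀, DifferentiableAt ℂ num w := by
      intro w hw
      have h1 : DifferentiableAt ℂ (fun w => M (γ w)) w :=
        (M.differentiableAt).comp w (hγdiff w hw)
      exact ((innerSL ℂ u₀).differentiableAt).comp w h1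
    have hdendiff : ∀ w ∈ Metric.ball w₀ ε₀, DifferentiableAt ℂ den w := by
      intro w hw
      exact ((innerSL ℂ u₀).differentiableAt).comp w (hγdiff w hw)
    have hγw₀ : γ w₀ = u₀ := by
      rw [hγ]
      simp [hF, Ring.inverse_one]
    have hden0 : den w₀ ≠ 0 := by
      rw [hden]
      simp only [hγw₀, innerSL_apply_apply]
      exact fun h => hu₀0 (inner_self_eq_zero.mp h)
    have hball0 : Metric.ball w₀ ε₀ ∈ nhds w₀ := Metric.ball_mem_nhds w₀ hε₀pos
    have hcontden : ContinuousAt den w₀ :=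
      (hdendiff w₀ (Metric.mem_ball_self hε₀pos)).continuousAt
    have hevent : ∀ᶠ w in nhds w₀, den w ≠ 0 ∧ w ∈ Ω ∧ w ∈ Metric.ball w₀ ε₀ := by
      filter_upwards [hcontden.eventually_ne hden0, hΩo.mem_nhds hw₀, hball0] with w h1 h2 h3
      exact ⟨h1, h2, h3⟩
    obtain ⟨ε₁, hε₁pos, hε₁⟩ := Metric.eventually_nhds_iff_ball.mp hevent
    -- on the ball, m equals a differentiable real-valued function
    set g : ℂ → ℂ := fun w => num w / den w with hg
    have hmg : ∀ w ∈ Metric.ball w₀ ε₁, m w = g w := by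
      intro w hw
      obtain ⟨hd0, hΩw, hballw⟩ := hε₁ w hw
      have h1 : M (γ w) = m w • γ w := hm w hΩw (γ w) (hγker w hballw)
      have h2 : num w = m w * den w := by
        simp only [hnum, hden, innerSL_apply_apply]
        rw [h1, inner_smul_right]
      simp only [hg]
      rw [h2]
      field_simp
    have hgderiv : ∀ w ∈ Metric.ball w₀ ε₁, HasDerivAt g 0 w := by
      intro w hw
      obtain ⟨hd0, hΩw, hballw⟩ := hε₁ w hw
      have hdiff : DifferentiableAt ℂ g w :=
        (hnumdiff w hballw).div (hdendiff w hballw) hd0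
      have hda := hdiff.hasDerivAt
      have hreal : ∀ᶠ w' in nhds w, (g w').im = 0 := by
        have hball : Metric.ball w₀ ε₁ ∈ nhds w := Metric.isOpen_ball.mem_nhds hw
        filter_upwards [hball] with w' hw'
        rw [← hmg w' hw']
        exact hre w' (hε₁ w' hw').2.1
      have := deriv_zero_of_real hda hreal
      rwa [this] at hda
    have hconst : ∀ w ∈ Metric.ball w₀ ε₁, g w = g w₀ := by
      intro w hw
      have hD : DifferentiableOn ℂ g (Metric.ball w₀ ε₁) := fun w' hw' =>
        ((hnumdiff w' (hε₁ w' hw').2.2).div (hdendiff w' (hε₁ w' hw').2.2)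
          (hε₁ w' hw').1).differentiableWithinAt
      have hfw : ∀ w' ∈ Metric.ball w₀ ε₁, fderivWithin ℂ g (Metric.ball w₀ ε₁) w' = 0 := by
        intro w' hw'
        rw [fderivWithin_of_isOpen Metric.isOpen_ball hw']
        have h1 := (hgderiv w' hw').hasFDerivAt.fderiv
        rw [h1]
        ext x
        simp
      exact (convex_ball w₀ ε₁).is_const_of_fderivWithin_eq_zero hD hfw hw
        (Metric.mem_ball_self hε₁pos)
    refine ⟨ε₁, hε₁pos, fun w hw => (hε₁ w hw).2.1, fun w hw => ?_⟩
    rw [hmg w hw, hconst w hw, ← hmg w₀ (Metric.mem_ball_self hε₁pos)]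
  -- global constancy via connectedness
  obtain ⟨w₁, hw₁⟩ := hΩc.nonempty
  set a : ℂ := m w₁ with ha
  have hglob : ∀ w ∈ Ω, m w = a := by
    set U : Set ℂ := {w | w ∈ Ω ∧ m w = a} with hU
    set V : Set ℂ := {w | w ∈ Ω ∧ m w ≠ a} with hV
    have hUopen : IsOpen U := by
      rw [isOpen_iff_mem_nhds]
      rintro w ⟨hwΩ, hwm⟩
      obtain ⟨ε, hεpos, hballΩ, hconst⟩ := hloc w hwΩ
      have : Metric.ball w ε ⊆ U := fun w' hw' => ⟨hballΩ hw', by rw [hconst w' hw', hwm]⟩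
      exact Filter.mem_of_superset (Metric.ball_mem_nhds w hεpos) this
    have hVopen : IsOpen V := by
      rw [isOpen_iff_mem_nhds]
      rintro w ⟨hwΩ, hwm⟩
      obtain ⟨ε, hεpos, hballΩ, hconst⟩ := hloc w hwΩ
      have : Metric.ball w ε ⊆ V := fun w' hw' => ⟨hballΩ hw', by rw [hconst w' hw']; exact hwm⟩
      exact Filter.mem_of_superset (Metric.ball_mem_nhds w hεpos) this
    have hdisj : Disjoint U V := by
      rw [Set.disjoint_iff]
      rintro w ⟨⟨-, h1⟩, ⟨-, h2⟩⟩
      exact absurd h1 h2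
    have hsub : Ω ⊆ U ∪ V := fun w hw => by
      by_cases h : m w = a
      · exact Or.inl ⟨hw, h⟩
      · exact Or.inr ⟨hw, h⟩
    have hne : (Ω ∩ U).Nonempty := ⟨w₁, hw₁, hw₁, rfl⟩
    have := hΩc.isPreconnected.subset_left_of_subset_union hUopen hVopen hdisj hsub hne
    exact fun w hw => (this hw).2
  refine ⟨a, ?_⟩
  have hzero : M - a • (1 : H →L[ℂ] H) = 0 := by
    apply op_eq_zero_of_vanish T hdense
    intro w hw v hv
    have h1 : M v = m w • v := hm w hw v hv
    have h2 : (M - a • (1 : H →L[ℂ] H)) v = M v - a • v := by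
      simp
    rw [h2, h1, hglob w hw, sub_self]
  exact sub_eq_zero.mp hzero
end S11Aux

open S11Aux in
set_option maxHeartbeats 2000000 in
/-- Every operator in `𝓕B₂(Ω)` is irreducible: the only orthogonal projections commuting
with it are `0` and `1`. -/
theorem statement11
    {H₀ H₁ : Type*}
    [NormedAddCommGroup H₀] [InnerProductSpace ℂ H₀] [CompleteSpace H₀]
    [TopologicalSpace.SeparableSpace H₀]
    [NormedAddCommGroup H₁] [InnerProductSpace ℂ H₁] [CompleteSpace H₁]
    [TopologicalSpace.SeparableSpace H₁]
    (Ω : Set ℂ) (hΩopen : IsOpen Ω) (hΩconn : IsConnected Ω)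
    (T₀ : H₀ →L[ℂ] H₀) (T₁ : H₁ →L[ℂ] H₁) (S : H₁ →L[ℂ] H₀)
    (h₀ : CowenDouglas 1 Ω T₀) (h₁ : CowenDouglas 1 Ω T₁)
    (hS : S ≠ 0) (hint : T₀ ∘L S = S ∘L T₁) :
    ∀ P : WithLp 2 (H₀ × H₁) →L[ℂ] WithLp 2 (H₀ × H₁),
      P * P = P → IsSelfAdjoint P →
      P * blockOp₂ T₀ S T₁ = blockOp₂ T₀ S T₁ * P →
      P = 0 ∨ P = 1 := by
  intro P hP2 hPsa hPcomm
  set E := WithLp.prodContinuousLinearEquiv 2 ℂ H₀ H₁ with hE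
  set N : (H₀ × H₁) →L[ℂ] (H₀ × H₁) :=
    (T₀ ∘L fst ℂ H₀ H₁ + S ∘L snd ℂ H₀ H₁).prod (T₁ ∘L snd ℂ H₀ H₁) with hNdef
  set Q : (H₀ × H₁) →L[ℂ] (H₀ × H₁) :=
    (E : WithLp 2 (H₀ × H₁) →L[ℂ] H₀ × H₁) ∘L P ∘L
      (E.symm : H₀ × H₁ →L[ℂ] WithLp 2 (H₀ × H₁)) with hQ
  have hb : ∀ v : WithLp 2 (H₀ × H₁), blockOp₂ T₀ S T₁ v = E.symm (N (E v)) := fun v => rfl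
  have hQapp : ∀ u : H₀ × H₁, Q u = E (P (E.symm u)) := fun u => rfl
  have hPQ : ∀ u : WithLp 2 (H₀ × H₁), P u = E.symm (Q (E u)) := by
    intro u
    rw [hQapp, ContinuousLinearEquiv.symm_apply_apply, ContinuousLinearEquiv.symm_apply_apply]
  have hQN : ∀ u : H₀ × H₁, Q (N u) = N (Q u) := by
    intro u
    have h : P (blockOp₂ T₀ S T₁ ((E.symm : H₀ × H₁ →L[ℂ] WithLp 2 (H₀ × H₁)) u))
        = blockOp₂ T₀ S T₁ (P ((E.symm : H₀ × H₁ →L[ℂ] WithLp 2 (H₀ × H₁)) u)) := by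
      have h0 := congrArg (fun F : WithLp 2 (H₀ × H₁) →L[ℂ] WithLp 2 (H₀ × H₁) =>
        F ((E.symm : H₀ × H₁ →L[ℂ] WithLp 2 (H₀ × H₁)) u)) hPcomm
      simpa using h0
    have h2 := congrArg (fun z => (E : WithLp 2 (H₀ × H₁) ≃L[ℂ] H₀ × H₁) z) h
    simp only [hb] at h2
    simp only [ContinuousLinearEquiv.apply_symm_apply] at h2
    calc Q (N u) = E (P (E.symm (N u))) := hQapp _
      _ = N (E (P (E.symm u))) := h2
      _ = N (Q u) := by rw [← hQapp]
  have hQQ : ∀ u : H₀ × H₁, Q (Q u) = Q u := by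
    intro u
    have h : P (P ((E.symm : H₀ × H₁ →L[ℂ] WithLp 2 (H₀ × H₁)) u))
        = P ((E.symm : H₀ × H₁ →L[ℂ] WithLp 2 (H₀ × H₁)) u) := by
      have h0 := congrArg (fun F : WithLp 2 (H₀ × H₁) →L[ℂ] WithLp 2 (H₀ × H₁) =>
        F ((E.symm : H₀ × H₁ →L[ℂ] WithLp 2 (H₀ × H₁)) u)) hP2
      simpa using h0
    have h2 := congrArg (fun z => (E : WithLp 2 (H₀ × H₁) ≃L[ℂ] H₀ × H₁) z) h
    calc Q (Q u) = E (P (E.symm (E (P (E.symm u))))) := by rw [hQapp, hQapp]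
      _ = E (P (P (E.symm u))) := by rw [ContinuousLinearEquiv.symm_apply_apply]
      _ = E (P (E.symm u)) := h2
      _ = Q u := (hQapp u).symm
  have hinner : ∀ u v : WithLp 2 (H₀ × H₁), ⟪P u, v⟫_ℂ = ⟪u, P v⟫_ℂ := by
    intro u v
    have hadj := ContinuousLinearMap.isSelfAdjoint_iff'.mp hPsa
    conv_lhs => rw [← hadj]
    exact ContinuousLinearMap.adjoint_inner_left P v u
  -- blocks
  set A : H₀ →L[ℂ] H₀ := (fst ℂ H₀ H₁) ∘L Q ∘L (inl ℂ H₀ H₁) with hA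
  set B : H₁ →L[ℂ] H₀ := (fst ℂ H₀ H₁) ∘L Q ∘L (inr ℂ H₀ H₁) with hB
  set C : H₀ →L[ℂ] H₁ := (snd ℂ H₀ H₁) ∘L Q ∘L (inl ℂ H₀ H₁) with hC
  set D : H₁ →L[ℂ] H₁ := (snd ℂ H₀ H₁) ∘L Q ∘L (inr ℂ H₀ H₁) with hD
  have hQ10 : ∀ x : H₀, Q (x, 0) = (A x, C x) := fun x => rfl
  have hQ01 : ∀ y : H₁, Q (0, y) = (B y, D y) := fun y => rfl
  have hQdec : ∀ u : H₀ × H₁, Q u = (A u.1 + B u.2, C u.1 + D u.2) := by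
    intro u
    have h0 : Q u = Q (u.1, 0) + Q (0, u.2) := by
      rw [← map_add]
      congr 1
      ext <;> simp
    rw [h0, hQ10, hQ01]
    rfl
  have hNapp : ∀ u : H₀ × H₁, N u = (T₀ u.1 + S u.2, T₁ u.2) := fun u => rfl
  -- the commutation relations
  have r12 : ∀ x : H₀, (A (T₀ x), C (T₀ x)) = (T₀ (A x) + S (C x), T₁ (C x)) := by
    intro x
    have h := hQN (x, 0)
    simp only [hNapp, hQdec, map_zero, add_zero, zero_add] at h
    simpa using h
  have r1 : ∀ x : H₀, A (T₀ x) = T₀ (A x) + S (C x) := fun x => congrArg Prod.fst (r12 x)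
  have r2 : ∀ x : H₀, C (T₀ x) = T₁ (C x) := fun x => congrArg Prod.snd (r12 x)
  have r34 : ∀ y : H₁, (A (S y) + B (T₁ y), C (S y) + D (T₁ y)) = (T₀ (B y) + S (D y), T₁ (D y)) := by
    intro y
    have h := hQN (0, y)
    simp only [hNapp, hQdec, map_zero, add_zero, zero_add] at h
    simpa using h
  have r3 : ∀ y : H₁, A (S y) + B (T₁ y) = T₀ (B y) + S (D y) := fun y => congrArg Prod.fst (r34 y)
  have r4 : ∀ y : H₁, C (S y) + D (T₁ y) = T₁ (D y) := fun y => congrArg Prod.snd (r34 y)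
  have r56 : ∀ x : H₀, (A (A x) + B (C x), C (A x) + D (C x)) = (A x, C x) := by
    intro x
    have h := hQQ (x, 0)
    simp only [hQdec, map_zero, add_zero, zero_add] at h
    simpa using h
  have r5 : ∀ x : H₀, A (A x) + B (C x) = A x := fun x => congrArg Prod.fst (r56 x)
  have r78 : ∀ y : H₁, (A (B y) + B (D y), C (B y) + D (D y)) = (B y, D y) := by
    intro y
    have h := hQQ (0, y)
    simp only [hQdec, map_zero, add_zero, zero_add] at h
    simpa using h
  have r6 : ∀ y : H₁, C (B y) + D (D y) = D y := fun y => congrArg Prod.snd (r78 y)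
  -- inner product relations
  have hQsa : ∀ u v : H₀ × H₁,
      ⟪(Q u).1, v.1⟫_ℂ + ⟪(Q u).2, v.2⟫_ℂ = ⟪u.1, (Q v).1⟫_ℂ + ⟪u.2, (Q v).2⟫_ℂ := by
    intro u v
    exact hinner ((E.symm : H₀ × H₁ →L[ℂ] WithLp 2 (H₀ × H₁)) u)
      ((E.symm : H₀ × H₁ →L[ℂ] WithLp 2 (H₀ × H₁)) v)
  have rsaA : ∀ x x' : H₀, ⟪A x, x'⟫_ℂ = ⟪x, A x'⟫_ℂ := by
    intro x x'
    have h := hQsa (x, 0) (x', 0)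
    simp only [hQdec, map_zero, add_zero, zero_add] at h
    simpa using h
  have rsaD : ∀ y y' : H₁, ⟪D y, y'⟫_ℂ = ⟪y, D y'⟫_ℂ := by
    intro y y'
    have h := hQsa (0, y) (0, y')
    simp only [hQdec, map_zero, add_zero, zero_add] at h
    simpa using h
  have rsaBC : ∀ (y : H₁) (x : H₀), ⟪B y, x⟫_ℂ = ⟪y, C x⟫_ℂ := by
    intro y x
    have h := hQsa (0, y) (x, 0)
    simp only [hQdec, map_zero, add_zero, zero_add] at h
    simpa using h
  have hintp : ∀ y : H₁, S (T₁ y) = T₀ (S y) := by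
    intro y
    have := congrArg (fun (F : H₁ →L[ℂ] H₀) => F y) hint
    simpa using this.symm
  -- Kleinecke-Shirokov step : C ∘L S = 0 and S ∘L C = 0
  have hXCS : ∀ y : H₁, (dl T₁ D) y = C (S y) := by
    intro y
    simp only [dl, ContinuousLinearMap.sub_apply, ContinuousLinearMap.mul_apply]
    rw [← r4 y]
    abel
  have hcommX : (dl T₁ D) * T₁ = T₁ * (dl T₁ D) := by
    ext y
    simp only [ContinuousLinearMap.mul_apply]
    rw [hXCS, hXCS, hintp, r2]
  have hCSop : C ∘L S = 0 := by
    apply op_eq_zero_of_vanish T₁ h₁.2.2.1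
    intro w hw v hv
    have h := comm_vanish T₁ D hcommX w (h₁.2.2.2 w hw) v hv
    rw [hXCS] at h
    simpa using h
  have hYSC : ∀ x : H₀, (dl T₀ (-A)) x = S (C x) := by
    intro x
    simp only [dl, ContinuousLinearMap.sub_apply, ContinuousLinearMap.mul_apply,
      ContinuousLinearMap.neg_apply, map_neg]
    rw [r1 x]
    abel
  have hcommY : (dl T₀ (-A)) * T₀ = T₀ * (dl T₀ (-A)) := by
    ext x
    simp only [ContinuousLinearMap.mul_apply]
    rw [hYSC, hYSC, r2]
    exact hintp (C x)
  have hSCop : S ∘L C = 0 := by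
    apply op_eq_zero_of_vanish T₀ h₀.2.2.1
    intro w hw v hv
    have h := comm_vanish T₀ (-A) hcommY w (h₀.2.2.2 w hw) v hv
    rw [hYSC] at h
    simpa using h
  have hCS0 : ∀ y : H₁, C (S y) = 0 := by
    intro y
    have := congrArg (fun (F : H₁ →L[ℂ] H₁) => F y) hCSop
    simpa using this
  have hSC0 : ∀ x : H₀, S (C x) = 0 := by
    intro x
    have := congrArg (fun (F : H₀ →L[ℂ] H₀) => F x) hSCop
    simpa using this
  -- A and D commute with T₀, T₁ and are scalars
  have hAcomm : A * T₀ = T₀ * A := by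
    ext x
    simp only [ContinuousLinearMap.mul_apply]
    rw [r1 x, hSC0, add_zero]
  have hDcomm : D * T₁ = T₁ * D := by
    ext y
    simp only [ContinuousLinearMap.mul_apply]
    have := r4 y
    rw [hCS0, zero_add] at this
    exact this
  obtain ⟨a, hAs⟩ := scalar_of_sa_comm hΩopen hΩconn T₀ A h₀.2.1 h₀.2.2.2 h₀.2.2.1 rsaA hAcomm
  obtain ⟨d, hDs⟩ := scalar_of_sa_comm hΩopen hΩconn T₁ D h₁.2.1 h₁.2.2.2 h₁.2.2.1 rsaD hDcomm
  have hAx : ∀ x : H₀, A x = a • x := by intro x; rw [hAs]; simp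
  have hDy : ∀ y : H₁, D y = d • y := by intro y; rw [hDs]; simp
  -- C ∘ B is scalar, hence zero
  have hCB : ∀ y : H₁, C (B y) = (d - d * d) • y := by
    intro y
    have h := r6 y
    rw [hDy (D y), hDy y, smul_smul] at h
    have : C (B y) = d • y - (d * d) • y := by
      rw [← h]; abel
    rw [this, sub_smul]
  have hdS : (d - d * d) • S = 0 := by
    ext y
    have h1 : S (C (B y)) = 0 := hSC0 (B y)
    rw [hCB y, map_smul] at h1
    simpa using h1
  have hd : d - d * d = 0 := by
    rcases smul_eq_zero.mp hdS with h | h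
    · exact h
    · exact absurd h hS
  have hCB0 : ∀ y : H₁, C (B y) = 0 := by
    intro y
    rw [hCB y, hd, zero_smul]
  have hB0 : ∀ y : H₁, B y = 0 := by
    intro y
    have h1 : ⟪B y, B y⟫_ℂ = 0 := by rw [rsaBC y (B y), hCB0, inner_zero_right]
    exact inner_self_eq_zero.mp h1
  have hC0 : ∀ x : H₀, C x = 0 := by
    intro x
    have h1 : ⟪C x, C x⟫_ℂ = 0 := by rw [← rsaBC (C x) x, hB0, inner_zero_left]
    exact inner_self_eq_zero.mp h1
  -- a is idempotent and a = d
  have hex : ∃ y : H₁, S y ≠ 0 := by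
    by_contra h
    push_neg at h
    apply hS
    ext y
    simpa using h y
  obtain ⟨y₀, hy₀⟩ := hex
  have hx₀ : (S y₀ : H₀) ≠ 0 := hy₀
  have ha2 : a * a = a := by
    have h := r5 (S y₀)
    rw [hC0, map_zero, add_zero, hAx, hAx, smul_smul] at h
    have h2 : (a * a - a) • (S y₀) = 0 := by rw [sub_smul, h, sub_self]
    rcases smul_eq_zero.mp h2 with h3 | h3
    · linear_combination h3
    · exact absurd h3 hx₀
  have had : a = d := by
    have h := r3 y₀
    rw [hB0, hB0, map_zero, add_zero, zero_add, hAx, hDy, map_smul] at h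
    have h2 : (a - d) • (S y₀) = 0 := by rw [sub_smul, h, sub_self]
    rcases smul_eq_zero.mp h2 with h3 | h3
    · exact sub_eq_zero.mp h3
    · exact absurd h3 hx₀
  have haa : a = 0 ∨ a = 1 := by
    have h : a * (a - 1) = 0 := by ring_nf; linear_combination ha2
    rcases mul_eq_zero.mp h with h1 | h1
    · exact Or.inl h1
    · exact Or.inr (by linear_combination h1)
  -- conclude
  have hPu : ∀ u : WithLp 2 (H₀ × H₁), P u = a • u := by
    intro u
    have h1 : Q (E u) = a • (E u) := by
      rw [hQdec, hAx, hB0, hDy, hC0, add_zero, zero_add, ← had]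
      rfl
    calc P u = E.symm (Q (E u)) := hPQ u
      _ = E.symm (a • (E u)) := by rw [h1]
      _ = a • u := by rw [map_smul, ContinuousLinearEquiv.symm_apply_apply]
  rcases haa with h | h
  · left
    ext u
    rw [hPu, h, zero_smul]
    rfl
  · right
    ext u
    rw [hPu, h, one_smul]
    rfl
end
end

section
/- Let Ω be a connected open subset of ℂ and let T_0 be an operator in B_1(Ω) on a complex separable Hilbert space H_0. Then the operator T = [[T_0, I],[0, T_0]] acting on H_0 ⊕ H_0 (where I is the identity on H_0) is strongly irreducible; that is, the only idempotent operators commuting with T are 0 and the identity. -/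
noncomputable section
open ContinuousLinearMap


section KS

variable {E : Type*} [NormedRing E] [NormedAlgebra ℂ E] [CompleteSpace E] [NormOneClass E]

private lemma ks_dadd (T X Y : E) :
    (X + Y) * T - T * (X + Y) = (X * T - T * X) + (Y * T - T * Y) := by noncomm_ring

private lemma ks_dsmul (T : E) (s : ℂ) (X : E) :
    (s • X) * T - T * (s • X) = s • (X * T - T * X) := by
  simp [smul_mul_assoc, mul_smul_comm, smul_sub]

private lemma ks_dmul (T C Z : E) (hcomm : C * T = T * C) :
    (C * Z) * T - T * (C * Z) = C * (Z * T - T * Z) := by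
  have h : T * (C * Z) = C * (T * Z) := by rw [← mul_assoc, ← hcomm, mul_assoc]
  rw [h, mul_sub, mul_assoc]

private lemma ks_base (T A C : E) (hC : C = A * T - T * A) (Y : E) :
    (A * Y) * T - T * (A * Y) = A * (Y * T - T * Y) + C * Y := by
  subst hC; noncomm_ring

private lemma ks_leibniz (T A C : E) (hC : C = A * T - T * A) (hcomm : C * T = T * C) :
    ∀ n Y, (fun X => X * T - T * X)^[n + 1] (A * Y) =
      A * ((fun X => X * T - T * X)^[n + 1] Y) +
        ((n : ℂ) + 1) • (C * ((fun X => X * T - T * X)^[n] Y)) := by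
  set δ : E → E := fun X => X * T - T * X with hδ
  intro n
  induction n with
  | zero =>
    intro Y
    simp only [zero_add, Function.iterate_one, Function.iterate_zero, id_eq, Nat.cast_zero,
      one_smul]
    exact ks_base T A C hC Y
  | succ n ih =>
    intro Y
    rw [Function.iterate_succ_apply' δ (n + 1) (A * Y), ih Y]
    have h1 : δ (A * δ^[n + 1] Y + ((n : ℂ) + 1) • (C * δ^[n] Y)) =
        δ (A * δ^[n + 1] Y) + δ (((n : ℂ) + 1) • (C * δ^[n] Y)) := ks_dadd T _ _
    rw [h1, show δ (A * δ^[n + 1] Y) = A * δ (δ^[n + 1] Y) + C * (δ^[n + 1] Y) from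
      ks_base T A C hC _,
      show δ (((n : ℂ) + 1) • (C * δ^[n] Y)) = ((n : ℂ) + 1) • δ (C * δ^[n] Y) from
      ks_dsmul T _ _,
      show δ (C * δ^[n] Y) = C * δ (δ^[n] Y) from ks_dmul T C _ hcomm,
      ← Function.iterate_succ_apply' δ (n + 1) Y, ← Function.iterate_succ_apply' δ n Y]
    simp only [Nat.succ_eq_add_one]
    push_cast
    rw [show ((n : ℂ) + 1 + 1) • (C * δ^[n + 1] Y) =
      ((n : ℂ) + 1) • (C * δ^[n + 1] Y) + C * δ^[n + 1] Y by rw [add_smul, one_smul]]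
    abel

private lemma ks_cpow_comm (T C : E) (hcomm : C * T = T * C) (n : ℕ) :
    C ^ n * T = T * C ^ n := by
  induction n with
  | zero => simp
  | succ n ih => rw [pow_succ, mul_assoc, hcomm, ← mul_assoc, ih, mul_assoc]

private lemma ks_pow (T A C : E) (hC : C = A * T - T * A) (hcomm : C * T = T * C) :
    ∀ n, (fun X => X * T - T * X)^[n] (A ^ n) = ((Nat.factorial n) : ℂ) • C ^ n := by
  set δ : E → E := fun X => X * T - T * X with hδ
  intro n
  induction n with
  | zero => simp
  | succ n ih =>
    rw [pow_succ']
    rw [ks_leibniz T A C hC hcomm n (A ^ n), ih]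
    have hδC : δ (C ^ n) = 0 := by
      show C ^ n * T - T * C ^ n = 0
      rw [ks_cpow_comm T C hcomm n, sub_self]
    rw [Function.iterate_succ_apply' δ n (A ^ n), ih,
      show δ (((Nat.factorial n) : ℂ) • C ^ n) = ((Nat.factorial n) : ℂ) • δ (C ^ n) from ks_dsmul T _ _,
      hδC]
    rw [smul_zero, mul_zero, zero_add, mul_smul_comm, ← pow_succ', smul_smul]
    congr 1
    push_cast [Nat.factorial_succ]
    ring

private lemma ks_norm (T : E) : ∀ (n : ℕ) (X : E),
    ‖(fun X => X * T - T * X)^[n] X‖ ≤ (2 * ‖T‖) ^ n * ‖X‖ := by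
  intro n
  induction n with
  | zero => simp
  | succ n ih =>
    intro X
    rw [Function.iterate_succ_apply']
    calc ‖(fun X => X * T - T * X)^[n] X * T - T * (fun X => X * T - T * X)^[n] X‖
        ≤ ‖(fun X => X * T - T * X)^[n] X * T‖ + ‖T * (fun X => X * T - T * X)^[n] X‖ :=
          norm_sub_le _ _
      _ ≤ ‖(fun X => X * T - T * X)^[n] X‖ * ‖T‖ + ‖T‖ * ‖(fun X => X * T - T * X)^[n] X‖ :=
          add_le_add (norm_mul_le _ _) (norm_mul_le _ _)
      _ = 2 * ‖T‖ * ‖(fun X => X * T - T * X)^[n] X‖ := by ring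
      _ ≤ 2 * ‖T‖ * ((2 * ‖T‖) ^ n * ‖X‖) := by
          apply mul_le_mul_of_nonneg_left (ih X) (by positivity)
      _ = (2 * ‖T‖) ^ (n + 1) * ‖X‖ := by ring

/-- Kleinecke–Shirokov: if `C = [A,T]` commutes with `T`, then the spectrum of `C` is `{0}`. -/
lemma ks_spectrum (T A C : E) (hC : C = A * T - T * A) (hcomm : C * T = T * C)
    {μ : ℂ} (hμ : μ ∈ spectrum ℂ C) : μ = 0 := by
  by_contra hμ0
  set M : ℝ := 2 * ‖T‖ * ‖A‖ with hM
  have hbound : ∀ n : ℕ, (Nat.factorial n : ℝ) * ‖C ^ n‖ ≤ M ^ n := by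
    intro n
    have h1 : ‖((Nat.factorial n) : ℂ) • C ^ n‖ = (Nat.factorial n : ℝ) * ‖C ^ n‖ := by
      rw [norm_smul]; simp
    have h2 := ks_norm T n (A ^ n)
    rw [ks_pow T A C hC hcomm n, h1] at h2
    calc (Nat.factorial n : ℝ) * ‖C ^ n‖ ≤ (2 * ‖T‖) ^ n * ‖A ^ n‖ := h2
      _ ≤ (2 * ‖T‖) ^ n * ‖A‖ ^ n := by
          exact mul_le_mul_of_nonneg_left (norm_pow_le A n) (by positivity)
      _ = M ^ n := by rw [hM]; ring
  have hspec : ∀ n : ℕ, ‖μ‖ ^ n ≤ ‖C ^ n‖ := by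
    intro n
    have h1 : μ ^ n ∈ spectrum ℂ (C ^ n) := spectrum.pow_image_subset C n ⟨μ, hμ, rfl⟩
    simpa [norm_pow] using spectrum.norm_le_norm_of_mem h1
  -- combine : n ! ≤ (M / ‖μ‖) ^ n
  have hμpos : (0 : ℝ) < ‖μ‖ := norm_pos_iff.2 hμ0
  set r : ℝ := M / ‖μ‖ with hr
  have hfac : ∀ n : ℕ, (Nat.factorial n : ℝ) ≤ r ^ n := by
    intro n
    have h1 : (Nat.factorial n : ℝ) * ‖μ‖ ^ n ≤ M ^ n :=
      le_trans (mul_le_mul_of_nonneg_left (hspec n) (by positivity)) (hbound n)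
    rw [hr, div_pow, le_div_iff₀ (by positivity)]
    linarith [h1]
  have htend := FloorSemiring.tendsto_pow_div_factorial_atTop (K := ℝ) r
  have h1 : ∀ᶠ n : ℕ in Filter.atTop, r ^ n / (Nat.factorial n : ℝ) < 1 :=
    Filter.Tendsto.eventually_lt_const one_pos htend
  obtain ⟨n, hn⟩ := h1.exists
  have hfacpos : (0 : ℝ) < (Nat.factorial n : ℝ) := by positivity
  have : r ^ n < (Nat.factorial n : ℝ) := by
    rw [div_lt_one hfacpos] at hn; exact hn
  linarith [hfac n]

end KS



section Big
variable {H : Type*} [NormedAddCommGroup H] [InnerProductSpace ℂ H] [CompleteSpace H]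

/-- Vanishing on all the kernels plus density implies zero. -/
lemma vanish_on_kernels (Ω : Set ℂ) (T : H →L[ℂ] H)
    (hdense : (⨆ w ∈ Ω, LinearMap.ker ((T - w • (1 : H →L[ℂ] H) : H →L[ℂ] H) : H →ₗ[ℂ] H)).topologicalClosure = ⊤)
    (B : H →L[ℂ] H)
    (h : ∀ w ∈ Ω, ∀ x ∈ LinearMap.ker ((T - w • (1 : H →L[ℂ] H) : H →L[ℂ] H) : H →ₗ[ℂ] H), B x = 0) : B = 0 := by
  have h1 : (⨆ w ∈ Ω, LinearMap.ker ((T - w • (1 : H →L[ℂ] H) : H →L[ℂ] H) : H →ₗ[ℂ] H)) ≤ LinearMap.ker (B : H →ₗ[ℂ] H) := by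
    refine iSup_le fun w => iSup_le fun hw => fun x hx => ?_
    exact LinearMap.mem_ker.mpr (h w hw x hx)
  have h2 := Submodule.topologicalClosure_minimal _ h1 (ContinuousLinearMap.isClosed_ker B)
  rw [hdense] at h2
  ext x
  simpa using LinearMap.mem_ker.mp (h2 (Submodule.mem_top (x := x)))

/-- Local right inverse for `T - w₀`. -/
lemma exists_right_inverse (T : H →L[ℂ] H) (w₀ : ℂ)
    (hsur : Function.Surjective (T - w₀ • (1 : H →L[ℂ] H))) :
    ∃ S : H →L[ℂ] H, ∀ h : H, (T - w₀ • (1 : H →L[ℂ] H)) (S h) = h := by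
  set K := LinearMap.ker ((T - w₀ • (1 : H →L[ℂ] H) : H →L[ℂ] H) : H →ₗ[ℂ] H) with hK
  have hKclosed : IsClosed (K : Set H) := ContinuousLinearMap.isClosed_ker (T - w₀ • (1 : H →L[ℂ] H))
  haveI : CompleteSpace K := hKclosed.completeSpace_coe
  set M := Kᗮ with hM
  haveI : CompleteSpace M := K.isClosed_orthogonal.completeSpace_coe
  set f : M →L[ℂ] H := (T - w₀ • (1 : H →L[ℂ] H)) ∘L M.subtypeL with hf
  have hker : LinearMap.ker (f : M →ₗ[ℂ] H) = ⊥ := by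
    rw [Submodule.eq_bot_iff]
    intro x hx
    have hx1 : (x : H) ∈ K := LinearMap.mem_ker.mpr (by simpa [hf] using hx)
    have hx2 : (x : H) ∈ Kᗮ := x.2
    have : (x : H) ∈ (⊥ : Submodule ℂ H) :=
      (Submodule.orthogonal_disjoint K).le_bot ⟨hx1, hx2⟩
    exact Subtype.ext (by simpa using this)
  have hrange : LinearMap.range (f : M →ₗ[ℂ] H) = ⊤ := by
    rw [LinearMap.range_eq_top]
    intro h
    obtain ⟨x, hx⟩ := hsur h
    obtain ⟨y, hy, z, hz, hxyz⟩ := K.exists_add_mem_mem_orthogonal x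
    refine ⟨⟨z, hz⟩, ?_⟩
    have hy0 : (T - w₀ • (1 : H →L[ℂ] H)) y = 0 := hy
    have : (T - w₀ • (1 : H →L[ℂ] H)) z = h := by
      have := congrArg (T - w₀ • (1 : H →L[ℂ] H)) hxyz
      rw [map_add, hy0, zero_add] at this
      rw [← this, hx]
    simpa [hf] using this
  set e := ContinuousLinearEquiv.ofBijective f hker hrange with he
  refine ⟨M.subtypeL ∘L (e.symm : H →L[ℂ] M), fun h => ?_⟩
  have : f (e.symm h) = h := by
    have := e.apply_symm_apply h
    rwa [ContinuousLinearEquiv.coeFn_ofBijective] at this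
  simpa [hf] using this


/-- Local approximate eigenvector: for `w` close to `w₀`, there is `u ∈ ker (T - w)` close
to a given `e₀ ∈ ker (T - w₀)`. -/
lemma local_section (T : H →L[ℂ] H) (w₀ : ℂ) (S : H →L[ℂ] H)
    (hS : ∀ h : H, (T - w₀ • (1 : H →L[ℂ] H)) (S h) = h)
    (e₀ : H) (he₀ : e₀ ∈ LinearMap.ker ((T - w₀ • (1 : H →L[ℂ] H) : H →L[ℂ] H) : H →ₗ[ℂ] H))
    (w : ℂ) (hw : ‖w - w₀‖ * ‖S‖ ≤ 1 / 2) :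
    ∃ u : H, u ∈ LinearMap.ker ((T - w • (1 : H →L[ℂ] H) : H →L[ℂ] H) : H →ₗ[ℂ] H) ∧
      (u = 0 → e₀ = 0) ∧ ‖u - e₀‖ ≤ ‖w - w₀‖ * ‖S‖ * (2 * ‖e₀‖) := by
  set t : H →L[ℂ] H := (w - w₀) • S with ht
  have htn : ‖t‖ ≤ 1 / 2 := by
    rw [ht, norm_smul]
    exact hw
  have ht1 : ‖t‖ < 1 := lt_of_le_of_lt htn (by norm_num)
  set v := (Units.oneSub t ht1)⁻¹ with hv
  set u : H := (v : H →L[ℂ] H) e₀ with hu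
  have huv : u - t u = e₀ := by
    have h1 : ((Units.oneSub t ht1 : (H →L[ℂ] H)ˣ) : H →L[ℂ] H) *
        ((v : (H →L[ℂ] H)ˣ) : H →L[ℂ] H) = 1 := by
      rw [hv]; exact_mod_cast (Units.oneSub t ht1).mul_inv
    have h2 := congrArg (fun (g : H →L[ℂ] H) => g e₀) h1
    simp only [ContinuousLinearMap.mul_apply, ContinuousLinearMap.one_apply] at h2
    calc u - t u = ((1 - t : H →L[ℂ] H)) u := by
          simp [ContinuousLinearMap.sub_apply]
      _ = e₀ := by
          rw [show ((1 : H →L[ℂ] H) - t) = ((Units.oneSub t ht1 : (H →L[ℂ] H)ˣ) : H →L[ℂ] H)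
            from (Units.val_oneSub t ht1).symm]
          exact h2
  have hTu : (T - w₀ • (1 : H →L[ℂ] H)) u = (w - w₀) • u := by
    have h3 : u = e₀ + t u := by rw [← huv]; abel
    calc (T - w₀ • (1 : H →L[ℂ] H)) u = (T - w₀ • (1 : H →L[ℂ] H)) (e₀ + t u) := by rw [← h3]
      _ = (T - w₀ • (1 : H →L[ℂ] H)) e₀ + (T - w₀ • (1 : H →L[ℂ] H)) (t u) := map_add _ _ _
      _ = (T - w₀ • (1 : H →L[ℂ] H)) (((w - w₀) • S) u) := by
          rw [show (T - w₀ • (1 : H →L[ℂ] H)) e₀ = 0 from LinearMap.mem_ker.mp he₀, zero_add]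
      _ = (w - w₀) • ((T - w₀ • (1 : H →L[ℂ] H)) (S u)) := by
          rw [ContinuousLinearMap.smul_apply, map_smul]
      _ = (w - w₀) • u := by rw [hS u]
  have hker : u ∈ LinearMap.ker ((T - w • (1 : H →L[ℂ] H) : H →L[ℂ] H) : H →ₗ[ℂ] H) := by
    rw [LinearMap.mem_ker]
    have h4 : (T - w • (1 : H →L[ℂ] H)) u
        = (T - w₀ • (1 : H →L[ℂ] H)) u - (w - w₀) • u := by
      simp only [ContinuousLinearMap.sub_apply, ContinuousLinearMap.smul_apply,
        ContinuousLinearMap.one_apply, sub_smul]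
      abel
    rw [ContinuousLinearMap.coe_coe, h4, hTu, sub_self]
  have hbnd : ‖u‖ ≤ 2 * ‖e₀‖ := by
    have h5 : ‖u‖ ≤ ‖e₀‖ + ‖t‖ * ‖u‖ := by
      calc ‖u‖ = ‖e₀ + t u‖ := by rw [show e₀ + t u = u by rw [← huv]; abel]
        _ ≤ ‖e₀‖ + ‖t u‖ := norm_add_le _ _
        _ ≤ ‖e₀‖ + ‖t‖ * ‖u‖ := by gcongr; exact ContinuousLinearMap.le_opNorm t u
    nlinarith [norm_nonneg u, norm_nonneg e₀]
  refine ⟨u, hker, ?_, ?_⟩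
  · intro hu0
    rw [← huv, hu0, map_zero, sub_zero]
  · have h6 : u - e₀ = t u := by rw [← huv]; abel
    calc ‖u - e₀‖ = ‖t u‖ := by rw [h6]
      _ ≤ ‖t‖ * ‖u‖ := ContinuousLinearMap.le_opNorm t u
      _ ≤ ‖t‖ * (2 * ‖e₀‖) := by
          apply mul_le_mul_of_nonneg_left hbnd (norm_nonneg t)
      _ = ‖w - w₀‖ * ‖S‖ * (2 * ‖e₀‖) := by rw [ht, norm_smul]


lemma eig_zero (C : H →L[ℂ] H) (hq : ∀ μ ∈ spectrum ℂ C, μ = 0)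
    {x : H} (hx : x ≠ 0) {c : ℂ} (h : C x = c • x) : c = 0 := by
  apply hq
  rw [spectrum.mem_iff]
  intro hu
  obtain ⟨u, hu⟩ := hu
  apply hx
  have h1 : (algebraMap ℂ (H →L[ℂ] H) c - C) x = 0 := by
    rw [Algebra.algebraMap_eq_smul_one]
    simp [ContinuousLinearMap.sub_apply, ContinuousLinearMap.smul_apply, h]
  calc x = ((↑u⁻¹ * ↑u : H →L[ℂ] H)) x := by rw [Units.inv_mul]; simp
    _ = (↑u⁻¹ : H →L[ℂ] H) ((↑u : H →L[ℂ] H) x) := rfl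
    _ = 0 := by rw [hu, h1, map_zero]

lemma idem_dichotomy (Ω : Set ℂ) (hΩopen : IsOpen Ω) (hΩconn : IsConnected Ω)
    (T : H →L[ℂ] H)
    (hsur : ∀ w ∈ Ω, Function.Surjective (T - w • (1 : H →L[ℂ] H)))
    (hdense : (⨆ w ∈ Ω, LinearMap.ker ((T - w • (1 : H →L[ℂ] H) : H →L[ℂ] H) : H →ₗ[ℂ] H)).topologicalClosure = ⊤)
    (hrank : ∀ w ∈ Ω, Module.finrank ℂ (LinearMap.ker ((T - w • (1 : H →L[ℂ] H) : H →L[ℂ] H) : H →ₗ[ℂ] H)) = 1)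
    (A : H →L[ℂ] H) (hA2 : ∀ x, A (A x) = A x) (hcomm : ∀ x, A (T x) = T (A x)) :
    A = 0 ∨ A = 1 := by
  have hmapker : ∀ (w : ℂ), ∀ x ∈ LinearMap.ker ((T - w • (1 : H →L[ℂ] H) : H →L[ℂ] H) : H →ₗ[ℂ] H),
      A x ∈ LinearMap.ker ((T - w • (1 : H →L[ℂ] H) : H →L[ℂ] H) : H →ₗ[ℂ] H) := by
    intro w x hx
    rw [LinearMap.mem_ker, ContinuousLinearMap.coe_coe] at hx ⊢
    have h1 : (T - w • (1 : H →L[ℂ] H)) (A x) = A ((T - w • (1 : H →L[ℂ] H)) x) := by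
      simp only [ContinuousLinearMap.sub_apply, ContinuousLinearMap.smul_apply,
        ContinuousLinearMap.one_apply, map_sub, map_smul]
      rw [hcomm x]
    rw [h1, hx, map_zero]
  have hscal : ∀ w ∈ Ω, ∀ x ∈ LinearMap.ker ((T - w • (1 : H →L[ℂ] H) : H →L[ℂ] H) : H →ₗ[ℂ] H), x ≠ 0 →
      ∀ y ∈ LinearMap.ker ((T - w • (1 : H →L[ℂ] H) : H →L[ℂ] H) : H →ₗ[ℂ] H), ∃ c : ℂ, c • x = y := by
    intro w hw x hx hx0 y hy
    have h1 := (finrank_eq_one_iff_of_nonzero'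
      (⟨x, hx⟩ : ↥(LinearMap.ker ((T - w • (1 : H →L[ℂ] H) : H →L[ℂ] H) : H →ₗ[ℂ] H)))
      (fun h => hx0 (congrArg Subtype.val h))).mp (hrank w hw) ⟨y, hy⟩
    obtain ⟨c, hc⟩ := h1
    exact ⟨c, congrArg Subtype.val hc⟩
  have hex : ∀ w ∈ Ω, ∃ e : H, e ∈ LinearMap.ker ((T - w • (1 : H →L[ℂ] H) : H →L[ℂ] H) : H →ₗ[ℂ] H) ∧ e ≠ 0 := by
    intro w hw
    haveI := Module.nontrivial_of_finrank_eq_succ (n := 0) (hrank w hw)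
    obtain ⟨e, he⟩ := exists_ne (0 : ↥(LinearMap.ker ((T - w • (1 : H →L[ℂ] H) : H →L[ℂ] H) : H →ₗ[ℂ] H)))
    exact ⟨↑e, e.2, by simpa [Submodule.coe_eq_zero] using he⟩
  set O : Set ℂ :=
    {w : ℂ | w ∈ Ω ∧ ∀ x ∈ LinearMap.ker ((T - w • (1 : H →L[ℂ] H) : H →L[ℂ] H) : H →ₗ[ℂ] H), A x = x} with hO
  set Z : Set ℂ :=
    {w : ℂ | w ∈ Ω ∧ ∀ x ∈ LinearMap.ker ((T - w • (1 : H →L[ℂ] H) : H →L[ℂ] H) : H →ₗ[ℂ] H), A x = 0} with hZ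
  have hcov : Ω ⊆ O ∪ Z := by
    intro w hw
    obtain ⟨e, heker, he0⟩ := hex w hw
    obtain ⟨a, ha⟩ := hscal w hw e heker he0 (A e) (hmapker w e heker)
    have haa : (a * a - a) • e = 0 := by
      have h1 : A (A e) = A e := hA2 e
      rw [← ha, map_smul, ← ha] at h1
      rw [sub_smul, smul_smul] at *
      rw [h1]
      simp [← ha]
    have ha01 : a = 0 ∨ a = 1 := by
      have h2 : a * a - a = 0 := by
        rcases smul_eq_zero.mp haa with h | h
        · exact h
        · exact absurd h he0
      have h3 : a * (a - 1) = 0 := by linear_combination h2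
      rcases mul_eq_zero.mp h3 with h | h
      · exact Or.inl h
      · exact Or.inr (by linear_combination h)
    rcases ha01 with h | h
    · right
      refine ⟨hw, fun x hx => ?_⟩
      obtain ⟨c, hc⟩ := hscal w hw e heker he0 x hx
      rw [← hc, map_smul, ← ha, h]
      simp
    · left
      refine ⟨hw, fun x hx => ?_⟩
      obtain ⟨c, hc⟩ := hscal w hw e heker he0 x hx
      rw [← hc, map_smul, ← ha, h]
      simp
  have hkey : ∀ w₀ ∈ Ω, ∃ ρ > 0, Metric.ball w₀ ρ ⊆ Ω ∧
      ∀ w ∈ Metric.ball w₀ ρ, ∀ a b : ℂ, ‖a - b‖ = 1 → ‖b‖ ≤ 1 →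
        (∀ x ∈ LinearMap.ker ((T - w₀ • (1 : H →L[ℂ] H) : H →L[ℂ] H) : H →ₗ[ℂ] H), A x = a • x) →
        (∀ x ∈ LinearMap.ker ((T - w • (1 : H →L[ℂ] H) : H →L[ℂ] H) : H →ₗ[ℂ] H), A x = b • x) → False := by
    intro w₀ hw₀
    obtain ⟨S, hS⟩ := exists_right_inverse T w₀ (hsur w₀ hw₀)
    obtain ⟨ρ₀, hρ₀pos, hball⟩ := Metric.isOpen_iff.mp hΩopen w₀ hw₀
    set ρ : ℝ := min ρ₀ (1 / (2 * (‖A‖ + 1) * (‖S‖ + 1))) with hρ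
    have hρpos : 0 < ρ := lt_min hρ₀pos (by positivity)
    refine ⟨ρ, hρpos, subset_trans (Metric.ball_subset_ball (min_le_left _ _)) hball, ?_⟩
    intro w hwball a b hab hb ha hbw
    obtain ⟨e₀, he₀ker, he₀0⟩ := hex w₀ hw₀
    have hdist : ‖w - w₀‖ < ρ := by
      rw [Metric.mem_ball, dist_eq_norm] at hwball
      exact hwball
    have hρ2 : ρ ≤ 1 / (2 * (‖A‖ + 1) * (‖S‖ + 1)) := min_le_right _ _
    have hApos : (0:ℝ) < ‖A‖ + 1 := by positivity
    have hSpos : (0:ℝ) < ‖S‖ + 1 := by positivity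
    have hsmall : ‖w - w₀‖ * ‖S‖ * (2 * (‖A‖ + 1)) < 1 := by
      have h1 : ‖w - w₀‖ < 1 / (2 * (‖A‖ + 1) * (‖S‖ + 1)) := lt_of_lt_of_le hdist hρ2
      have h2 : ‖w - w₀‖ * (2 * (‖A‖ + 1) * (‖S‖ + 1)) < 1 := by
        rw [← lt_div_iff₀ (by positivity)]
        exact h1
      nlinarith [norm_nonneg S, norm_nonneg (w - w₀), norm_nonneg A]
    have hhalf : ‖w - w₀‖ * ‖S‖ ≤ 1 / 2 := by
      nlinarith [norm_nonneg S, norm_nonneg (w - w₀), norm_nonneg A,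
        mul_nonneg (norm_nonneg (w - w₀)) (norm_nonneg S)]
    obtain ⟨u, huker, hu0, hudist⟩ := local_section T w₀ S hS e₀ he₀ker w hhalf
    have hu0' : u ≠ 0 := fun h => he₀0 (hu0 h)
    have hAe₀ : A e₀ = a • e₀ := ha e₀ he₀ker
    have hAu : A u = b • u := hbw u huker
    have hsplit : (a - b) • e₀ = A (e₀ - u) + b • (u - e₀) := by
      rw [map_sub, hAe₀, hAu, sub_smul, smul_sub]
      abel
    have hkey2 : ‖e₀‖ ≤ (‖A‖ + 1) * ‖u - e₀‖ := by
      have h1 : ‖(a - b) • e₀‖ = ‖e₀‖ := by rw [norm_smul, hab, one_mul]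
      have h2 : ‖A (e₀ - u)‖ ≤ ‖A‖ * ‖u - e₀‖ := by
        rw [show e₀ - u = -(u - e₀) by abel, map_neg, norm_neg]
        exact ContinuousLinearMap.le_opNorm A _
      have h3 : ‖b • (u - e₀)‖ ≤ 1 * ‖u - e₀‖ := by
        rw [norm_smul]
        exact mul_le_mul_of_nonneg_right hb (norm_nonneg _)
      calc ‖e₀‖ = ‖(a - b) • e₀‖ := h1.symm
        _ ≤ ‖A (e₀ - u)‖ + ‖b • (u - e₀)‖ := by rw [hsplit]; exact norm_add_le _ _
        _ ≤ ‖A‖ * ‖u - e₀‖ + 1 * ‖u - e₀‖ := add_le_add h2 h3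
        _ = (‖A‖ + 1) * ‖u - e₀‖ := by ring
    have he₀pos : (0:ℝ) < ‖e₀‖ := norm_pos_iff.mpr he₀0
    have hfinal : ‖e₀‖ < ‖e₀‖ := by
      calc ‖e₀‖ ≤ (‖A‖ + 1) * ‖u - e₀‖ := hkey2
        _ ≤ (‖A‖ + 1) * (‖w - w₀‖ * ‖S‖ * (2 * ‖e₀‖)) := by
            exact mul_le_mul_of_nonneg_left hudist (by positivity)
        _ = (‖w - w₀‖ * ‖S‖ * (2 * (‖A‖ + 1))) * ‖e₀‖ := by ring
        _ < 1 * ‖e₀‖ := by exact mul_lt_mul_of_pos_right hsmall he₀pos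
        _ = ‖e₀‖ := one_mul _
    exact absurd hfinal (lt_irrefl _)
  have hOopen : IsOpen O := by
    rw [Metric.isOpen_iff]
    intro w₀ hw₀O
    obtain ⟨ρ, hρpos, hballΩ, hk⟩ := hkey w₀ hw₀O.1
    refine ⟨ρ, hρpos, fun w hw => ?_⟩
    have hwΩ : w ∈ Ω := hballΩ hw
    rcases hcov hwΩ with h | h
    · exact h
    · exfalso
      refine hk w hw 1 0 (by norm_num) (by norm_num)
        (fun x hx => by rw [hw₀O.2 x hx, one_smul]) (fun x hx => by rw [h.2 x hx, zero_smul])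
  have hZopen : IsOpen Z := by
    rw [Metric.isOpen_iff]
    intro w₀ hw₀Z
    obtain ⟨ρ, hρpos, hballΩ, hk⟩ := hkey w₀ hw₀Z.1
    refine ⟨ρ, hρpos, fun w hw => ?_⟩
    have hwΩ : w ∈ Ω := hballΩ hw
    rcases hcov hwΩ with h | h
    · exfalso
      refine hk w hw 0 1 (by norm_num) (by norm_num)
        (fun x hx => by rw [hw₀Z.2 x hx, zero_smul]) (fun x hx => by rw [h.2 x hx, one_smul])
    · exact h
  have hdisj : Disjoint O Z := by
    rw [Set.disjoint_left]
    rintro w ⟨hwΩ, hwO⟩ ⟨-, hwZ⟩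
    obtain ⟨e, heker, he0⟩ := hex w hwΩ
    exact he0 (by rw [← hwO e heker, hwZ e heker])
  rcases hΩconn.isPreconnected.subset_or_subset hOopen hZopen hdisj hcov with h | h
  · right
    have h1 : A - 1 = 0 := by
      apply vanish_on_kernels Ω T hdense
      intro w hw x hx
      have := (h hw).2 x hx
      simp [ContinuousLinearMap.sub_apply, this]
    rw [sub_eq_zero] at h1
    exact h1
  · left
    apply vanish_on_kernels Ω T hdense
    intro w hw x hx
    exact (h hw).2 x hx

end Big

open scoped InnerProductSpace

/-- For `T₀ ∈ B₁(Ω)`, the operator `[[T₀, I], [0, T₀]]` is strongly irreducible: the only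
idempotents commuting with it are `0` and `1`. -/
theorem statement12
    {H₀ : Type*}
    [NormedAddCommGroup H₀] [InnerProductSpace ℂ H₀] [CompleteSpace H₀]
    [TopologicalSpace.SeparableSpace H₀]
    (Ω : Set ℂ) (hΩopen : IsOpen Ω) (hΩconn : IsConnected Ω)
    (T₀ : H₀ →L[ℂ] H₀) (h₀ : CowenDouglas 1 Ω T₀) :
    ∀ P : WithLp 2 (H₀ × H₀) →L[ℂ] WithLp 2 (H₀ × H₀),
      P * P = P →
      P * blockOp₂ T₀ (ContinuousLinearMap.id ℂ H₀) T₀ =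
        blockOp₂ T₀ (ContinuousLinearMap.id ℂ H₀) T₀ * P →
      P = 0 ∨ P = 1 := by
  intro P hP2 hPT
  obtain ⟨hspec, hsur, hdense, hrank⟩ := h₀
  rcases subsingleton_or_nontrivial H₀ with hss | hnt
  · left
    haveI : Subsingleton (H₀ × H₀) := inferInstance
    haveI : Subsingleton (WithLp 2 (H₀ × H₀)) := (WithLp.equiv 2 (H₀ × H₀)).subsingleton
    ext x
    exact Subsingleton.elim _ _
  set φ := WithLp.prodContinuousLinearEquiv 2 ℂ H₀ H₀ with hφ
  set Tb := blockOp₂ T₀ (ContinuousLinearMap.id ℂ H₀) T₀ with hTb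
  set Q : H₀ × H₀ →L[ℂ] H₀ × H₀ :=
    ((φ : WithLp 2 (H₀ × H₀) →L[ℂ] H₀ × H₀) ∘L P) ∘L
      (φ.symm : H₀ × H₀ →L[ℂ] WithLp 2 (H₀ × H₀)) with hQdef
  have hQv : ∀ v : H₀ × H₀, Q v = φ (P (φ.symm v)) := fun v => rfl
  set A := fst ℂ H₀ H₀ ∘L Q ∘L inl ℂ H₀ H₀ with hAdef
  set B := fst ℂ H₀ H₀ ∘L Q ∘L inr ℂ H₀ H₀ with hBdef
  set C := snd ℂ H₀ H₀ ∘L Q ∘L inl ℂ H₀ H₀ with hCdef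
  set D := snd ℂ H₀ H₀ ∘L Q ∘L inr ℂ H₀ H₀ with hDdef
  have hQapp : ∀ x y : H₀, Q (x, y) = (A x + B y, C x + D y) := by
    intro x y
    have h1 : ((x, y) : H₀ × H₀) = (x, 0) + (0, y) := by simp
    have h2 : Q (x, 0) = (A x, C x) := by
      rw [hAdef, hCdef]
      simp only [ContinuousLinearMap.comp_apply, ContinuousLinearMap.inl_apply,
        ContinuousLinearMap.coe_fst', ContinuousLinearMap.coe_snd']
    have h3 : Q (0, y) = (B y, D y) := by
      rw [hBdef, hDdef]
      simp only [ContinuousLinearMap.comp_apply, ContinuousLinearMap.inr_apply,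
        ContinuousLinearMap.coe_fst', ContinuousLinearMap.coe_snd']
    rw [h1, map_add, h2, h3, Prod.mk_add_mk]
  have hTbapp : ∀ v : H₀ × H₀, φ (Tb (φ.symm v)) = (T₀ v.1 + v.2, T₀ v.2) := by
    intro v
    rw [hTb]
    unfold blockOp₂
    simp only [ContinuousLinearMap.comp_apply, ContinuousLinearEquiv.coe_coe,
      ContinuousLinearMap.prod_apply, ContinuousLinearMap.add_apply,
      ContinuousLinearMap.coe_fst', ContinuousLinearMap.coe_snd',
      ContinuousLinearMap.coe_comp', Function.comp_apply, ContinuousLinearMap.coe_id', id_eq]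
    rfl
  -- pointwise commutation for Q
  have hQT : ∀ v : H₀ × H₀,
      Q (T₀ v.1 + v.2, T₀ v.2) = (T₀ (Q v).1 + (Q v).2, T₀ (Q v).2) := by
    intro v
    have hPT' : ∀ z, P (Tb z) = Tb (P z) := by
      intro z
      have := congrArg (fun (g : WithLp 2 (H₀ × H₀) →L[ℂ] WithLp 2 (H₀ × H₀)) => g z) hPT
      simpa [ContinuousLinearMap.mul_apply] using this
    calc Q (T₀ v.1 + v.2, T₀ v.2) = Q (φ (Tb (φ.symm v))) := by rw [hTbapp]
      _ = φ (P (φ.symm (φ (Tb (φ.symm v))))) := hQv _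
      _ = φ (P (Tb (φ.symm v))) := by rw [φ.symm_apply_apply]
      _ = φ (Tb (P (φ.symm v))) := by rw [hPT']
      _ = φ (Tb (φ.symm (φ (P (φ.symm v))))) := by rw [φ.symm_apply_apply]
      _ = (T₀ (Q v).1 + (Q v).2, T₀ (Q v).2) := by rw [hTbapp, hQv]
  have hQQ : ∀ v : H₀ × H₀, Q (Q v) = Q v := by
    intro v
    have hP2' : ∀ z, P (P z) = P z := by
      intro z
      have := congrArg (fun (g : WithLp 2 (H₀ × H₀) →L[ℂ] WithLp 2 (H₀ × H₀)) => g z) hP2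
      simpa [ContinuousLinearMap.mul_apply] using this
    calc Q (Q v) = φ (P (φ.symm (φ (P (φ.symm v))))) := by rw [hQv, hQv]
      _ = φ (P (P (φ.symm v))) := by rw [φ.symm_apply_apply]
      _ = Q v := by rw [hP2', hQv]
  -- the eight pointwise equations
  have E1 : ∀ x : H₀, A (T₀ x) = T₀ (A x) + C x := by
    intro x
    have := hQT (x, 0)
    rw [hQapp] at this
    simp only [map_zero, add_zero] at this
    rw [hQapp] at this
    have := congrArg Prod.fst this
    simpa using this
  have E3 : ∀ x : H₀, C (T₀ x) = T₀ (C x) := by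
    intro x
    have := hQT (x, 0)
    rw [hQapp] at this
    simp only [map_zero, add_zero] at this
    rw [hQapp] at this
    have := congrArg Prod.snd this
    simpa using this
  have E2 : ∀ y : H₀, A y + B (T₀ y) = T₀ (B y) + D y := by
    intro y
    have := hQT (0, y)
    rw [hQapp] at this
    simp only [map_zero, zero_add] at this
    rw [hQapp] at this
    have := congrArg Prod.fst this
    simpa using this
  have E4 : ∀ y : H₀, C y + D (T₀ y) = T₀ (D y) := by
    intro y
    have := hQT (0, y)
    rw [hQapp] at this
    simp only [map_zero, zero_add] at this
    rw [hQapp] at this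
    have := congrArg Prod.snd this
    simpa using this
  have F1 : ∀ x : H₀, A (A x) + B (C x) = A x := by
    intro x
    have h := hQQ (x, 0)
    rw [hQapp x 0] at h
    simp only [map_zero, add_zero] at h
    rw [hQapp (A x) (C x)] at h
    have := congrArg Prod.fst h
    simpa using this
  have F4 : ∀ x : H₀, C (B x) + D (D x) = D x := by
    intro x
    have h := hQQ (0, x)
    rw [hQapp 0 x] at h
    simp only [map_zero, zero_add] at h
    rw [hQapp (B x) (D x)] at h
    have := congrArg Prod.snd h
    simpa using this
  have F2 : ∀ y : H₀, A (B y) + B (D y) = B y := by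
    intro y
    have h := hQQ (0, y)
    rw [hQapp 0 y] at h
    simp only [map_zero, zero_add] at h
    rw [hQapp (B y) (D y)] at h
    have := congrArg Prod.fst h
    simpa using this
  -- Step 1 : C = 0 via Kleinecke-Shirokov
  have hCop : C = A * T₀ - T₀ * A := by
    ext x
    simp only [ContinuousLinearMap.sub_apply, ContinuousLinearMap.mul_apply]
    rw [E1 x]
    abel
  have hCcomm : C * T₀ = T₀ * C := by
    ext x
    simp only [ContinuousLinearMap.mul_apply]
    exact E3 x
  have hqC : ∀ μ ∈ spectrum ℂ C, μ = 0 := fun μ hμ => ks_spectrum T₀ A C hCop hCcomm hμ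
  have hC0 : C = 0 := by
    apply vanish_on_kernels Ω T₀ hdense
    intro w hw x hx
    by_cases hx0 : x = 0
    · rw [hx0, map_zero]
    · -- C x ∈ ker, which is one-dimensional
      have hCx : C x ∈ LinearMap.ker ((T₀ - w • (1 : H₀ →L[ℂ] H₀) : H₀ →L[ℂ] H₀) : H₀ →ₗ[ℂ] H₀) := by
        rw [LinearMap.mem_ker, ContinuousLinearMap.coe_coe] at hx ⊢
        have h1 : (T₀ - w • (1 : H₀ →L[ℂ] H₀)) (C x)
            = C ((T₀ - w • (1 : H₀ →L[ℂ] H₀)) x) := by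
          simp only [ContinuousLinearMap.sub_apply, ContinuousLinearMap.smul_apply,
            ContinuousLinearMap.one_apply, map_sub, map_smul]
          rw [E3 x]
        rw [h1, hx, map_zero]
      obtain ⟨c, hc⟩ := (finrank_eq_one_iff_of_nonzero'
        (⟨x, hx⟩ : ↥(LinearMap.ker ((T₀ - w • (1 : H₀ →L[ℂ] H₀) : H₀ →L[ℂ] H₀) : H₀ →ₗ[ℂ] H₀)))
        (fun h => hx0 (congrArg Subtype.val h))).mp (hrank w hw) ⟨C x, hCx⟩
      have hc' : c • x = C x := congrArg Subtype.val hc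
      have hc0 : c = 0 := eig_zero C hqC hx0 hc'.symm
      rw [← hc', hc0, zero_smul]
  have hCzero : ∀ x : H₀, C x = 0 := fun x => by rw [hC0]; rfl
  -- consequences
  have hAcomm : ∀ x, A (T₀ x) = T₀ (A x) := by
    intro x; rw [E1 x, hCzero, add_zero]
  have hDcomm : ∀ x, D (T₀ x) = T₀ (D x) := by
    intro x
    have := E4 x
    rwa [hCzero, zero_add] at this
  have hA2 : ∀ x, A (A x) = A x := by
    intro x
    have := F1 x
    rwa [hCzero, map_zero, add_zero] at this
  have hD2 : ∀ x, D (D x) = D x := by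
    intro x
    have := F4 x
    rwa [hCzero, zero_add] at this
  -- D - A is quasinilpotent
  have hDAop : D - A = B * T₀ - T₀ * B := by
    ext y
    simp only [ContinuousLinearMap.sub_apply, ContinuousLinearMap.mul_apply]
    rw [sub_eq_sub_iff_add_eq_add]
    calc D y + T₀ (B y) = T₀ (B y) + D y := add_comm _ _
      _ = A y + B (T₀ y) := (E2 y).symm
      _ = B (T₀ y) + A y := add_comm _ _
  have hDAcomm : (D - A) * T₀ = T₀ * (D - A) := by
    ext x
    simp only [ContinuousLinearMap.mul_apply, ContinuousLinearMap.sub_apply]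
    rw [hDcomm, hAcomm, map_sub]
  have hqDA : ∀ μ ∈ spectrum ℂ (D - A), μ = 0 :=
    fun μ hμ => ks_spectrum T₀ B (D - A) hDAop hDAcomm hμ
  have hAor := idem_dichotomy Ω hΩopen hΩconn T₀ hsur hdense hrank A hA2 hAcomm
  have hDor := idem_dichotomy Ω hΩopen hΩconn T₀ hsur hdense hrank D hD2 hDcomm
  obtain ⟨x₀, hx₀⟩ := exists_ne (0 : H₀)
  -- rule out the mixed cases
  have hAD : A = D := by
    rcases hAor with hA | hA <;> rcases hDor with hD | hD
    · rw [hA, hD]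
    · exfalso
      have h1 : (D - A) x₀ = (1 : ℂ) • x₀ := by
        rw [ContinuousLinearMap.sub_apply, hD, hA]
        simp
      exact one_ne_zero (eig_zero (D - A) hqDA hx₀ h1)
    · exfalso
      have h1 : (D - A) x₀ = (-1 : ℂ) • x₀ := by
        rw [ContinuousLinearMap.sub_apply, hD, hA]
        simp
      exact (by norm_num : ((-1 : ℂ)) ≠ 0) (eig_zero (D - A) hqDA hx₀ h1)
    · rw [hA, hD]
  have hB0 : ∀ y, B y = 0 := by
    intro y
    have hDA' : D = A := hAD.symm
    rcases hAor with hA | hA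
    · have := F2 y
      rw [hDA', hA] at this
      simpa using this.symm
    · have := F2 y
      rw [hDA', hA] at this
      simp only [ContinuousLinearMap.one_apply] at this
      exact add_eq_right.mp this
  have hPz : ∀ z, P z = φ.symm (Q (φ z)) := by
    intro z
    rw [hQv, φ.symm_apply_apply, φ.symm_apply_apply]
  rcases hAor with hA | hA
  · left
    ext z
    have hD0 : D = 0 := hAD.symm.trans hA
    have h1 : Q (φ z) = (0, 0) := by
      rw [← Prod.mk.eta (p := φ z), hQapp, hB0, hCzero, hA, hD0]
      simp
    rw [hPz z, h1]
    simp
  · right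
    ext z
    have hD1 : D = 1 := hAD.symm.trans hA
    have h1 : Q (φ z) = φ z := by
      rw [← Prod.mk.eta (p := φ z), hQapp, hB0, hCzero, hA, hD1]
      simp
    rw [hPz z, h1, φ.symm_apply_apply]
    simp
end
end
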